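/- arXiv:2301.05129 — 5 statements merged into one kernel-verified Lean document; each statement's English description precedes it below -/
import Mathlib

section
/- Let E and F be complex Banach spaces. For each n ∈ ℕ let f_n : E → F be a continuous homogeneous polynomial of degree n, i.e. f_n(x) = p_n(x, …, x) for some continuous n-linear map p_n : E^n → F (with f_0 a constant). Then the following are equivalent: (1) there exists a continuous function f : E → F such that for every x ∈ E the series Σ_{n=0}^∞ f_n(x) converges in F to f(x); (2) for every compact subset B ⊆ E the series Σ_{n=0}^∞ sup_{x ∈ B} ‖f_n(x)‖ converges. -/
set_option maxHeartbeats 800000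

open Filter Metric Set Real NNReal ENNReal

/-- Let `E`, `F` be complex Banach spaces and for each `n` let `f n : E → F` be a continuous
homogeneous polynomial of degree `n` (i.e. `f n x = pₙ(x, …, x)` for some continuous `n`-linear
map `pₙ`).  Then the series `∑ₙ fₙ(x)` converges for every `x` to a continuous function `g` if
and only if `∑ₙ sup_{x ∈ B} ‖fₙ(x)‖ < ∞` for every compact subset `B ⊆ E`. -/
theorem entire_iff_normal_convergence_on_compacts
    {E F : Type*} [NormedAddCommGroup E] [NormedSpace ℂ E] [CompleteSpace E]
    [NormedAddCommGroup F] [NormedSpace ℂ F] [CompleteSpace F]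
    (f : ℕ → E → F)
    (hf : ∀ n : ℕ, ∃ p : ContinuousMultilinearMap ℂ (fun _ : Fin n => E) F,
      ∀ x : E, f n x = p (fun _ => x)) :
    (∃ g : E → F, Continuous g ∧ ∀ x : E,
        Filter.Tendsto (fun N : ℕ => ∑ n ∈ Finset.range N, f n x)
          Filter.atTop (nhds (g x))) ↔
    (∀ B : Set E, IsCompact B → Summable fun n : ℕ => ⨆ x ∈ B, ‖f n x‖) := by
  have hcont : ∀ n, Continuous (f n) := by
    intro n
    obtain ⟨p, hp⟩ := hf n
    have : Continuous fun x : E => p (fun _ : Fin n => x) :=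
      p.cont.comp (continuous_pi fun _ => continuous_id)
    exact this.congr fun x => (hp x).symm
  have hhom : ∀ n (c : ℂ) (x : E), f n (c • x) = c ^ n • f n x := by
    intro n c x
    obtain ⟨p, hp⟩ := hf n
    rw [hp, hp]
    rw [show (fun _ : Fin n => c • x) = fun i : Fin n => c • (fun _ : Fin n => x) i from rfl,
      p.map_smul_univ]
    simp
  -- a helper: pointwise value is at most the sup over a compact set containing the point
  have hle : ∀ (B : Set E), IsCompact B → ∀ x ∈ B, ∀ n, ‖f n x‖ ≤ ⨆ x' ∈ B, ‖f n x'‖ := by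
    intro B hB x hx n
    obtain ⟨C, hC⟩ := hB.exists_bound_of_continuousOn (hcont n).continuousOn
    refine le_ciSup_of_le ⟨max C 0, ?_⟩ x ?_
    · rintro r ⟨x', rfl⟩
      exact Real.iSup_le (fun hx' => (hC x' hx').trans (le_max_left _ _)) (le_max_right _ _)
    · rw [ciSup_pos hx]
  constructor
  · rintro ⟨g, hg, hgs⟩ B hB
    -- bound g on the compact set (closedBall 0 2) • B
    have hK : IsCompact ((fun p : ℂ × E => p.1 • p.2) '' ((closedBall (0:ℂ) 2) ×ˢ B)) :=
      ((isCompact_closedBall (0:ℂ) 2).prod hB).image continuous_smul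
    obtain ⟨C, hC⟩ := hK.exists_bound_of_continuousOn hg.continuousOn
    set M : ℝ := max C 0 with hM
    have hM0 : 0 ≤ M := le_max_right _ _
    have hCM : ∀ (c : ℂ) (x : E), ‖c‖ ≤ 2 → x ∈ B → ‖g (c • x)‖ ≤ M := by
      intro c x hc hx
      exact le_trans (hC _ ⟨(c, x), ⟨mem_closedBall_zero_iff.2 hc, hx⟩, rfl⟩) (le_max_left _ _)
    -- the key Cauchy estimate
    have key : ∀ x ∈ B, ∀ n, ‖f n x‖ ≤ M * (2⁻¹ : ℝ) ^ n := by
      intro x hx n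
      have hconv : ∀ c : ℂ, Tendsto (fun N : ℕ => ∑ k ∈ Finset.range N, c ^ k • f k x)
          atTop (nhds (g (c • x))) := by
        intro c
        have := hgs (c • x)
        simpa only [hhom] using this
      -- terms at c = 3 are bounded
      have h3 := hconv 3
      have hterm : Tendsto (fun k : ℕ => (3:ℂ) ^ k • f k x) atTop (nhds 0) := by
        have h := (h3.comp (tendsto_add_atTop_nat 1)).sub h3
        simp only [Function.comp_def, Finset.sum_range_succ, sub_self] at h ⊢
        simpa using h
      obtain ⟨C₀, hC₀⟩ := hterm.norm.bddAbove_range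
      have hC₀' : ∀ k : ℕ, ‖f k x‖ * 3 ^ k ≤ C₀ := by
        intro k
        have := hC₀ ⟨k, rfl⟩
        simp only [norm_smul, norm_pow] at this
        have h3n : ‖(3:ℂ)‖ = 3 := by norm_num
        rw [h3n] at this
        linarith [this]
      -- the power series in one variable
      set q : FormalMultilinearSeries ℂ ℂ F :=
        fun k => ContinuousMultilinearMap.mkPiRing ℂ (Fin k) (f k x) with hq
      have hqnorm : ∀ k, ‖q k‖ = ‖f k x‖ := fun k =>
        ContinuousMultilinearMap.norm_mkPiRing _
      set h : ℂ → F := fun z => g (z • x) with hhdef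
      have hball : HasFPowerSeriesOnBall h q 0 3 := by
        refine ⟨?_, by norm_num, ?_⟩
        · have : ((3:ℝ≥0) : ℝ≥0∞) ≤ q.radius := by
            apply q.le_radius_of_bound C₀
            intro k
            rw [hqnorm]
            exact_mod_cast hC₀' k
          simpa using this
        · intro y hy
          have hy3 : ‖y‖ < 3 := by
            rw [mem_emetric_ball_zero_iff, enorm_eq_nnnorm] at hy
            exact_mod_cast hy
          have hqy : ∀ k : ℕ, (q k fun _ => y) = y ^ k • f k x := by
            intro k
            simp [hq, ContinuousMultilinearMap.mkPiRing_apply]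
          have hnorm_sum : Summable fun k : ℕ => ‖y ^ k • f k x‖ := by
            refine Summable.of_nonneg_of_le (f := fun k => C₀ * (‖y‖ / 3) ^ k)
              (fun k => norm_nonneg _) ?_ ?_
            · intro k
              rw [norm_smul, norm_pow]
              show ‖y‖ ^ k * ‖f k x‖ ≤ C₀ * (‖y‖ / 3) ^ k
              calc ‖y‖ ^ k * ‖f k x‖ = (‖f k x‖ * 3 ^ k) * (‖y‖ ^ k / 3 ^ k) := by
                    field_simp
                _ ≤ C₀ * (‖y‖ ^ k / 3 ^ k) :=
                    mul_le_mul_of_nonneg_right (hC₀' k) (by positivity)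
                _ = C₀ * (‖y‖ / 3) ^ k := by rw [div_pow]
            · exact (summable_geometric_of_lt_one (by positivity)
                (by rw [div_lt_one (by norm_num : (0:ℝ) < 3)]; exact hy3)).mul_left C₀
          have hs : Summable fun k : ℕ => y ^ k • f k x := hnorm_sum.of_norm
          have h1 := hs.hasSum
          have h2' := h1.tendsto_sum_nat
          have h3' := hconv y
          have : (∑' k, y ^ k • f k x) = g (y • x) := tendsto_nhds_unique h2' h3'
          rw [show h (0 + y) = g (y • x) by simp [hhdef]]
          rw [← this]
          simpa only [hqy] using h1
      have hd : DifferentiableOn ℂ h (closedBall (0:ℂ) ((2:ℝ≥0) : ℝ)) := by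
        apply (hball.differentiableOn).mono
        intro z hz
        rw [EMetric.mem_ball]
        have hz2 : ‖z‖ ≤ 2 := by simpa using mem_closedBall_zero_iff.1 hz
        calc edist z 0 = (‖z‖₊ : ℝ≥0∞) := by rw [edist_zero_right, enorm_eq_nnnorm]
          _ ≤ (2 : ℝ≥0∞) := by exact_mod_cast hz2
          _ < 3 := by norm_num
      have h2 : HasFPowerSeriesOnBall h (cauchyPowerSeries h 0 ((2:ℝ≥0):ℝ)) 0 (2:ℝ≥0) :=
        hd.hasFPowerSeriesOnBall (by norm_num)
      have heq : q = cauchyPowerSeries h 0 ((2:ℝ≥0):ℝ) :=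
        hball.hasFPowerSeriesAt.eq_formalMultilinearSeries h2.hasFPowerSeriesAt
      have hcirc : Continuous fun θ : ℝ => ‖h (circleMap 0 ((2:ℝ≥0):ℝ) θ)‖ := by
        apply Continuous.norm
        exact (hg.comp (continuous_id.smul continuous_const)).comp (continuous_circleMap _ _)
      have hint : (∫ θ : ℝ in (0)..2 * π, ‖h (circleMap 0 ((2:ℝ≥0):ℝ) θ)‖) ≤ 2 * π * M := by
        calc (∫ θ : ℝ in (0)..2 * π, ‖h (circleMap 0 ((2:ℝ≥0):ℝ) θ)‖)
            ≤ ∫ _θ : ℝ in (0)..2 * π, M := by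
              apply intervalIntegral.integral_mono_on Real.two_pi_pos.le
                (hcirc.intervalIntegrable _ _) intervalIntegrable_const
              intro θ _
              apply hCM
              · simp [norm_circleMap_zero]
              · exact hx
          _ = 2 * π * M := by simp [mul_comm]
      calc ‖f n x‖ = ‖q n‖ := (hqnorm n).symm
        _ = ‖cauchyPowerSeries h 0 ((2:ℝ≥0):ℝ) n‖ := by rw [heq]
        _ ≤ ((2 * π)⁻¹ * ∫ θ : ℝ in (0)..2 * π, ‖h (circleMap 0 ((2:ℝ≥0):ℝ) θ)‖) *
              |((2:ℝ≥0):ℝ)|⁻¹ ^ n := norm_cauchyPowerSeries_le _ _ _ _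
        _ ≤ M * (2⁻¹ : ℝ) ^ n := by
            have habs : |((2:ℝ≥0):ℝ)|⁻¹ = (2⁻¹ : ℝ) := by norm_num
            rw [habs]
            apply mul_le_mul_of_nonneg_right _ (by positivity)
            calc (2 * π)⁻¹ * ∫ θ : ℝ in (0)..2 * π, ‖h (circleMap 0 ((2:ℝ≥0):ℝ) θ)‖
                ≤ (2 * π)⁻¹ * (2 * π * M) := by
                  apply mul_le_mul_of_nonneg_left hint
                  positivity
              _ = M := by field_simp
    -- conclude summability of the sups
    refine Summable.of_nonneg_of_le (f := fun n => M * (2⁻¹ : ℝ) ^ n)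
      (fun n => Real.iSup_nonneg fun x => Real.iSup_nonneg fun _ => norm_nonneg _) ?_ ?_
    · intro n
      refine Real.iSup_le (fun x => Real.iSup_le (fun hx => key x hx n) (by positivity)) ?_
      positivity
    · exact (summable_geometric_of_lt_one (by norm_num) (by norm_num)).mul_left M
  · intro hS
    have hsx : ∀ x : E, Summable fun n => ‖f n x‖ := by
      intro x
      apply Summable.of_nonneg_of_le (fun n => norm_nonneg _)
        (fun n => hle {x} isCompact_singleton x rfl n)
      exact hS {x} isCompact_singleton
    have hsum : ∀ x : E, Summable fun n => f n x := fun x => (hsx x).of_norm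
    refine ⟨fun x => ∑' n, f n x, ?_, fun x => (hsum x).hasSum.tendsto_sum_nat⟩
    rw [continuous_iff_seqContinuous]
    intro u x hu
    set B : Set E := insert x (Set.range u) with hBdef
    have hB : IsCompact B := hu.isCompact_insert_range
    have hco : ContinuousOn (fun y => ∑' n, f n y) B :=
      continuousOn_tsum (fun i => (hcont i).continuousOn) (hS B hB)
        (fun n y hy => hle B hB y hy n)
    have hx : x ∈ B := mem_insert x _
    have huB : Tendsto u atTop (nhdsWithin x B) :=
      tendsto_nhdsWithin_iff.2 ⟨hu, Eventually.of_forall fun k => subset_insert _ _ ⟨k, rfl⟩⟩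
    exact ((hco x hx).tendsto).comp huB
end

section
/- Let E and F be complex Banach spaces and for each n ∈ ℕ let β_n : E^n → F be a continuous symmetric n-linear map (β_0 ∈ F a constant). Then the series Σ_{n=0}^∞ sup_{x ∈ B} ‖β_n(x, …, x)‖ converges for every compact subset B ⊆ E if and only if the series Σ_{n=0}^∞ sup_{x_1, …, x_n ∈ B} ‖β_n(x_1, …, x_n)‖ converges for every compact subset B ⊆ E. -/
open Finset

namespace SDAux

noncomputable def sgn (b : Bool) : ℂ := if b then 1 else -1

lemma norm_sgn (b : Bool) : ‖sgn b‖ = 1 := by cases b <;> simp [sgn]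

lemma sum_sgn_pow (m : ℕ) :
    (∑ b : Bool, sgn b ^ (1 + m)) = if Odd m then 2 else 0 := by
  simp only [Fintype.sum_bool, sgn, if_true, if_false, one_pow]
  norm_num
  rcases Nat.even_or_odd m with hm | hm
  · have h1 : Odd (1 + m) := by
      rcases hm with ⟨k, hk⟩; exact ⟨k, by omega⟩
    rw [h1.neg_one_pow, if_neg (by simpa using hm)]
    ring
  · have h1 : Even (1 + m) := by
      rcases hm with ⟨k, hk⟩; exact ⟨k + 1, by omega⟩
    rw [h1.neg_one_pow, if_pos hm]
    ring

lemma key_sum {n : ℕ} (f : Fin n → Fin n) :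
    (∑ ε : Fin n → Bool, ((∏ i, sgn (ε i)) * ∏ i, sgn (ε (f i))))
      = if Function.Bijective f then (2 : ℂ) ^ n else 0 := by
  classical
  have hm : ∀ ε : Fin n → Bool,
      ((∏ i, sgn (ε i)) * ∏ i, sgn (ε (f i)))
        = ∏ k : Fin n, sgn (ε k) ^ (1 + #{i | f i = k}) := by
    intro ε
    have h2 : (∏ i, sgn (ε (f i)))
        = ∏ k : Fin n, ∏ i ∈ ({i | f i = k} : Finset (Fin n)), sgn (ε (f i)) := by
      rw [Finset.prod_fiberwise_of_maps_to (fun i _ => Finset.mem_univ (f i))]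
    have h3 : ∀ k : Fin n, (∏ i ∈ ({i | f i = k} : Finset (Fin n)), sgn (ε (f i)))
        = sgn (ε k) ^ #{i | f i = k} := by
      intro k
      rw [Finset.prod_congr rfl (fun i hi => by
        simp only [Finset.mem_filter] at hi
        rw [hi.2]), Finset.prod_const]
    rw [h2, Finset.prod_congr rfl fun k _ => h3 k, ← Finset.prod_mul_distrib]
    exact Finset.prod_congr rfl fun k _ => by rw [pow_add, pow_one]
  rw [Finset.sum_congr rfl fun ε _ => hm ε]
  have expand : (∑ ε : Fin n → Bool, ∏ k : Fin n, sgn (ε k) ^ (1 + #{i | f i = k}))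
      = ∏ k : Fin n, ∑ b : Bool, sgn b ^ (1 + #{i | f i = k}) := by
    rw [← Fintype.piFinset_univ]
    exact (Finset.prod_univ_sum (fun _ : Fin n => (Finset.univ : Finset Bool))
      (fun k b => sgn b ^ (1 + #({i | f i = k} : Finset (Fin n))))).symm
  rw [expand]
  simp only [sum_sgn_pow]
  by_cases hbij : Function.Bijective f
  · rw [if_pos hbij]
    have hfib : ∀ k : Fin n, #({i | f i = k} : Finset (Fin n)) = 1 := by
      intro k
      rw [Finset.card_eq_one]
      refine ⟨(Equiv.ofBijective f hbij).symm k, ?_⟩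
      ext i
      simp only [Finset.mem_filter, Finset.mem_univ, true_and, Finset.mem_singleton]
      constructor
      · intro hi
        exact (Equiv.eq_symm_apply _).mpr (hi : (Equiv.ofBijective f hbij) i = k)
      · rintro rfl
        exact (Equiv.ofBijective f hbij).apply_symm_apply k
    rw [Finset.prod_congr rfl fun k _ => by rw [hfib k, if_pos odd_one]]
    simp
  · rw [if_neg hbij]
    -- some fiber has even cardinality
    by_contra hne
    apply hbij
    have hodd : ∀ k : Fin n, Odd #({i | f i = k} : Finset (Fin n)) := by
      intro k
      by_contra hk
      exact hne (Finset.prod_eq_zero (Finset.mem_univ k) (if_neg hk))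
    have hsum : (∑ k : Fin n, #({i | f i = k} : Finset (Fin n))) = n := by
      rw [← Finset.card_eq_sum_card_fiberwise (fun i _ => Finset.mem_univ (f i))]
      simp
    have hone : ∀ k : Fin n, #({i | f i = k} : Finset (Fin n)) = 1 := by
      have hle : ∀ k ∈ Finset.univ, 1 ≤ #({i | f i = k} : Finset (Fin n)) :=
        fun k _ => (hodd k).pos
      have h1 : (∑ _k : Fin n, (1 : ℕ)) = ∑ k : Fin n, #({i | f i = k} : Finset (Fin n)) := by
        rw [hsum]; simp
      intro k
      exact ((Finset.sum_eq_sum_iff_of_le hle).mp h1 k (Finset.mem_univ k)).symm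
    have hinj : Function.Injective f := by
      intro a b hab
      have ha : a ∈ ({i | f i = f b} : Finset (Fin n)) := by simp [hab]
      have hb : b ∈ ({i | f i = f b} : Finset (Fin n)) := by simp
      exact Finset.card_le_one.mp (le_of_eq (hone (f b))) a ha b hb
    exact Finite.injective_iff_bijective.mp hinj

variable {E F : Type*} [NormedAddCommGroup E] [NormedSpace ℂ E]
  [NormedAddCommGroup F] [NormedSpace ℂ F]

/-- Polarization identity for symmetric continuous multilinear maps. -/
lemma polarization (n : ℕ) (β : ContinuousMultilinearMap ℂ (fun _ : Fin n => E) F)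
    (hs : ∀ (x : Fin n → E) (σ : Equiv.Perm (Fin n)), β (x ∘ σ) = β x) (x : Fin n → E) :
    ((2 : ℂ) ^ n * n.factorial) • β x
      = ∑ ε : Fin n → Bool, (∏ i, sgn (ε i)) • β (fun _ => ∑ j, sgn (ε j) • x j) := by
  classical
  have step1 : ∀ ε : Fin n → Bool,
      β (fun _ => ∑ j, sgn (ε j) • x j)
        = ∑ r : Fin n → Fin n, (∏ i, sgn (ε (r i))) • β (x ∘ r) := by
    intro ε
    rw [β.map_sum (g := fun _ j => sgn (ε j) • x j)]
    exact Finset.sum_congr rfl fun r _ => β.map_smul_univ (fun i => sgn (ε (r i))) (x ∘ r)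
  refine Eq.symm ?_
  calc ∑ ε : Fin n → Bool, (∏ i, sgn (ε i)) • β (fun _ => ∑ j, sgn (ε j) • x j)
      = ∑ ε : Fin n → Bool, ∑ r : Fin n → Fin n,
          ((∏ i, sgn (ε i)) * ∏ i, sgn (ε (r i))) • β (x ∘ r) := by
        refine Finset.sum_congr rfl fun ε _ => ?_
        rw [step1 ε, Finset.smul_sum]
        exact Finset.sum_congr rfl fun r _ => (smul_smul _ _ _)
    _ = ∑ r : Fin n → Fin n,
          (∑ ε : Fin n → Bool, ((∏ i, sgn (ε i)) * ∏ i, sgn (ε (r i)))) • β (x ∘ r) := by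
        rw [Finset.sum_comm]
        exact Finset.sum_congr rfl fun r _ => (Finset.sum_smul).symm
    _ = ∑ r : Fin n → Fin n,
          (if Function.Bijective r then (2 : ℂ) ^ n else 0) • β (x ∘ r) := by
        exact Finset.sum_congr rfl fun r _ => by rw [key_sum r]
    _ = ∑ r ∈ ({r | Function.Bijective r} : Finset (Fin n → Fin n)),
          (2 : ℂ) ^ n • β (x ∘ r) := by
        rw [Finset.sum_filter]
        exact Finset.sum_congr rfl fun r _ => by
          by_cases h : Function.Bijective r <;> simp [h]
    _ = ∑ σ : Equiv.Perm (Fin n), (2 : ℂ) ^ n • β (x ∘ σ) := by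
        refine (Finset.sum_bij (fun (σ : Equiv.Perm (Fin n)) _ => (σ : Fin n → Fin n))
          ?_ ?_ ?_ ?_).symm
        · intro σ _
          simp only [Finset.mem_filter, Finset.mem_univ, true_and]
          exact σ.bijective
        · intro σ₁ _ σ₂ _ h
          exact Equiv.coe_fn_injective h
        · intro r hr
          simp only [Finset.mem_filter, Finset.mem_univ, true_and] at hr
          exact ⟨Equiv.ofBijective r hr, Finset.mem_univ _, rfl⟩
        · intro σ _; rfl
    _ = ((2 : ℂ) ^ n * n.factorial) • β x := by
        rw [Finset.sum_congr rfl fun σ _ => by rw [hs x σ], Finset.sum_const]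
        simp only [Finset.card_univ, Fintype.card_perm, Fintype.card_fin]
        rw [smul_comm, ← Nat.cast_smul_eq_nsmul ℂ, smul_smul, mul_comm]

lemma pow_le_three_pow_mul_factorial : ∀ n : ℕ, (n : ℝ) ^ n ≤ 3 ^ n * n.factorial := by
  intro n
  induction n with
  | zero => norm_num
  | succ n ih =>
    rcases Nat.eq_zero_or_pos n with rfl | hn
    · norm_num
    have hn' : (0 : ℝ) < n := by exact_mod_cast hn
    have key : ((n : ℝ) + 1) ^ n ≤ 3 * (n : ℝ) ^ n := by
      have h1 : ((n : ℝ) + 1) = (1 + 1 / n) * n := by field_simp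
      have h2 : (1 + 1 / (n : ℝ)) ^ n ≤ 3 := by
        have := Real.add_one_le_exp (1 / (n : ℝ))
        have h3 : (1 + 1 / (n : ℝ)) ^ n ≤ Real.exp (1 / n) ^ n := by
          apply pow_le_pow_left₀ (by positivity) (by linarith)
        rw [← Real.exp_nat_mul] at h3
        have : (n : ℝ) * (1 / n) = 1 := by field_simp
        rw [this] at h3
        exact h3.trans (by linarith [Real.exp_one_lt_d9])
      calc ((n : ℝ) + 1) ^ n = (1 + 1 / n) ^ n * (n : ℝ) ^ n := by
            rw [h1, mul_pow]
        _ ≤ 3 * (n : ℝ) ^ n := by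
            apply mul_le_mul_of_nonneg_right h2 (by positivity)
    push_cast
    calc ((n : ℝ) + 1) ^ (n + 1) = ((n : ℝ) + 1) * ((n : ℝ) + 1) ^ n := by ring
      _ ≤ ((n : ℝ) + 1) * (3 * (n : ℝ) ^ n) := by
          apply mul_le_mul_of_nonneg_left key (by positivity)
      _ ≤ ((n : ℝ) + 1) * (3 * (3 ^ n * n.factorial)) := by
          apply mul_le_mul_of_nonneg_left (mul_le_mul_of_nonneg_left ih (by norm_num))
            (by positivity)
      _ = 3 ^ (n + 1) * (((n : ℝ) + 1) * n.factorial) := by ring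
      _ = 3 ^ (n + 1) * ((n + 1).factorial : ℝ) := by
          rw [Nat.factorial_succ]
          push_cast
          ring

lemma bdd_diag (n : ℕ) (β : ContinuousMultilinearMap ℂ (fun _ : Fin n => E) F)
    {S : Set E} {C : ℝ} (hC : ∀ y ∈ S, ‖y‖ ≤ C) :
    BddAbove (Set.range fun y : E => ⨆ (_ : y ∈ S), ‖β (fun _ => y)‖) := by
  refine ⟨max 0 (‖β‖ * C ^ n), ?_⟩
  rintro _ ⟨y, rfl⟩
  refine Real.iSup_le (fun hy => le_trans ?_ (le_max_right _ _)) (le_max_left _ _)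
  calc ‖β (fun _ => y)‖ ≤ ‖β‖ * ∏ _i : Fin n, ‖y‖ := β.le_opNorm _
    _ ≤ ‖β‖ * C ^ n := by
        rw [Finset.prod_const, Finset.card_univ, Fintype.card_fin]
        exact mul_le_mul_of_nonneg_left
          (pow_le_pow_left₀ (norm_nonneg _) (hC y hy) n) (norm_nonneg _)

lemma le_diag_sup (n : ℕ) (β : ContinuousMultilinearMap ℂ (fun _ : Fin n => E) F)
    {S : Set E} {C : ℝ} (hC : ∀ y ∈ S, ‖y‖ ≤ C) {w : E} (hw : w ∈ S) :
    ‖β (fun _ => w)‖ ≤ ⨆ y ∈ S, ‖β (fun _ => y)‖ := by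
  have h := le_ciSup (bdd_diag n β hC) w
  rwa [ciSup_pos hw] at h

lemma bdd_full (n : ℕ) (β : ContinuousMultilinearMap ℂ (fun _ : Fin n => E) F)
    {B : Set E} {C : ℝ} (hC0 : 0 ≤ C) (hC : ∀ y ∈ B, ‖y‖ ≤ C) :
    BddAbove (Set.range fun z : Fin n → E => ⨆ (_ : ∀ i, z i ∈ B), ‖β z‖) := by
  refine ⟨max 0 (‖β‖ * C ^ n), ?_⟩
  rintro _ ⟨z, rfl⟩
  refine Real.iSup_le (fun hz => le_trans ?_ (le_max_right _ _)) (le_max_left _ _)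
  calc ‖β z‖ ≤ ‖β‖ * ∏ i : Fin n, ‖z i‖ := β.le_opNorm _
    _ ≤ ‖β‖ * C ^ n := by
        refine mul_le_mul_of_nonneg_left ?_ (norm_nonneg _)
        calc ∏ i : Fin n, ‖z i‖ ≤ ∏ _i : Fin n, C :=
              Finset.prod_le_prod (fun i _ => norm_nonneg _) (fun i _ => hC _ (hz i))
          _ = C ^ n := by rw [Finset.prod_const, Finset.card_univ, Fintype.card_fin]

lemma key_ineq (n : ℕ) (hn : n ≠ 0) (β : ContinuousMultilinearMap ℂ (fun _ : Fin n => E) F)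
    (hs : ∀ (x : Fin n → E) (σ : Equiv.Perm (Fin n)), β (x ∘ σ) = β x)
    {B S : Set E} {C : ℝ}
    (hC : ∀ y ∈ S, ‖y‖ ≤ C)
    (hmem : ∀ z : Fin n → E, (∀ i, z i ∈ B) → ∀ ε : Fin n → Bool,
      (3 : ℝ) • ((n : ℝ)⁻¹ • ∑ j, sgn (ε j) • z j) ∈ S)
    (x : Fin n → E) (hx : ∀ i, x i ∈ B) :
    ‖β x‖ ≤ ⨆ y ∈ S, ‖β (fun _ => y)‖ := by
  classical
  set D := ⨆ y ∈ S, ‖β (fun _ => y)‖ with hD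
  have hD0 : 0 ≤ D := Real.iSup_nonneg fun y => Real.iSup_nonneg fun _ => norm_nonneg _
  have hn' : (0 : ℝ) < n := by
    have := Nat.pos_of_ne_zero hn; exact_mod_cast this
  set v : (Fin n → Bool) → E := fun ε => ∑ j, sgn (ε j) • x j with hv
  have hterm : ∀ ε : Fin n → Bool, ‖β (fun _ => v ε)‖ ≤ ((n : ℝ) / 3) ^ n * D := by
    intro ε
    set w : E := (3 : ℝ) • ((n : ℝ)⁻¹ • v ε) with hwdef
    have hwS : w ∈ S := hmem x hx ε
    have hscal : v ε = (((n : ℝ) / 3 : ℝ) : ℂ) • w := by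
      rw [hwdef, Complex.coe_smul, smul_smul, smul_smul]
      rw [show ((n : ℝ) / 3) * 3 * ((n : ℝ))⁻¹ = 1 by field_simp, one_smul]
    have heq : ‖β (fun _ => v ε)‖ = ((n : ℝ) / 3) ^ n * ‖β (fun _ => w)‖ := by
      calc ‖β (fun _ => v ε)‖
          = ‖β (fun _ => (((n : ℝ) / 3 : ℝ) : ℂ) • w)‖ := by rw [← hscal]
        _ = ‖(∏ _i : Fin n, (((n : ℝ) / 3 : ℝ) : ℂ)) • β (fun _ => w)‖ := by
            rw [β.map_smul_univ (fun _ => (((n : ℝ) / 3 : ℝ) : ℂ)) (fun _ => w)]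
        _ = ((n : ℝ) / 3) ^ n * ‖β (fun _ => w)‖ := by
            rw [norm_smul, Finset.prod_const, Finset.card_univ, Fintype.card_fin,
              norm_pow, Complex.norm_real, Real.norm_eq_abs,
              abs_of_nonneg (by positivity)]
    rw [heq]
    exact mul_le_mul_of_nonneg_left (le_diag_sup n β hC hwS) (by positivity)
  have hpol := polarization n β hs x
  have hnorm : (2 : ℝ) ^ n * n.factorial * ‖β x‖ ≤ 2 ^ n * (((n : ℝ) / 3) ^ n * D) := by
    have h1 : (2 : ℝ) ^ n * n.factorial * ‖β x‖ = ‖((2 : ℂ) ^ n * n.factorial) • β x‖ := by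
      rw [norm_smul, norm_mul, norm_pow]
      simp [Complex.norm_natCast]
    rw [h1, hpol]
    calc ‖∑ ε : Fin n → Bool, (∏ i, sgn (ε i)) • β (fun _ => v ε)‖
        ≤ ∑ ε : Fin n → Bool, ‖(∏ i, sgn (ε i)) • β (fun _ => v ε)‖ := norm_sum_le _ _
      _ = ∑ ε : Fin n → Bool, ‖β (fun _ => v ε)‖ := by
          refine Finset.sum_congr rfl fun ε _ => ?_
          rw [norm_smul, norm_prod]
          have habs : ∀ b, ‖sgn b‖ = 1 := norm_sgn
          simp [habs]
      _ ≤ ∑ _ε : Fin n → Bool, ((n : ℝ) / 3) ^ n * D :=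
          Finset.sum_le_sum fun ε _ => hterm ε
      _ = 2 ^ n * (((n : ℝ) / 3) ^ n * D) := by
          rw [Finset.sum_const, Finset.card_univ, nsmul_eq_mul]
          congr 1
          simp [Fintype.card_fun]
  have hfac : ((n : ℝ) / 3) ^ n ≤ n.factorial := by
    rw [div_pow, div_le_iff₀ (by positivity)]
    calc (n : ℝ) ^ n ≤ 3 ^ n * n.factorial := pow_le_three_pow_mul_factorial n
      _ = (n.factorial : ℝ) * 3 ^ n := by ring
  have hfinal : (2 : ℝ) ^ n * n.factorial * ‖β x‖ ≤ 2 ^ n * n.factorial * D := by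
    calc (2 : ℝ) ^ n * n.factorial * ‖β x‖ ≤ 2 ^ n * (((n : ℝ) / 3) ^ n * D) := hnorm
      _ ≤ 2 ^ n * ((n.factorial : ℝ) * D) := by
          exact mul_le_mul_of_nonneg_left (mul_le_mul_of_nonneg_right hfac hD0)
            (by positivity)
      _ = 2 ^ n * n.factorial * D := by ring
  have hpos : (0 : ℝ) < 2 ^ n * n.factorial := by positivity
  exact le_of_mul_le_mul_left hfinal hpos

end SDAux

open SDAux

/-- Let `E`, `F` be complex Banach spaces and for each `n` let `βₙ : Eⁿ → F` be a continuous
symmetric `n`-linear map.  Then `∑ₙ sup_{x ∈ B} ‖βₙ(x, …, x)‖` converges for every compact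
`B ⊆ E` if and only if `∑ₙ sup_{x₁, …, xₙ ∈ B} ‖βₙ(x₁, …, xₙ)‖` converges for every compact
`B ⊆ E`. -/
theorem summable_diagonal_sup_iff_summable_full_sup
    {E F : Type*} [NormedAddCommGroup E] [NormedSpace ℂ E] [CompleteSpace E]
    [NormedAddCommGroup F] [NormedSpace ℂ F] [CompleteSpace F]
    (β : ∀ n : ℕ, ContinuousMultilinearMap ℂ (fun _ : Fin n => E) F)
    (hsymm : ∀ (n : ℕ) (x : Fin n → E) (σ : Equiv.Perm (Fin n)), β n (x ∘ σ) = β n x) :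
    (∀ B : Set E, IsCompact B → Summable fun n : ℕ => ⨆ x ∈ B, ‖β n (fun _ => x)‖) ↔
    (∀ B : Set E, IsCompact B →
      Summable fun n : ℕ => ⨆ (x : Fin n → E) (_ : ∀ i, x i ∈ B), ‖β n x‖) := by
  constructor
  · intro hdiag B hB
    rcases Set.eq_empty_or_nonempty B with rfl | hBne
    · apply summable_of_ne_finset_zero (s := ({0} : Finset ℕ))
      intro n hn
      have hn0 : n ≠ 0 := by simpa using hn
      have inner0 : (fun x : Fin n → E => ⨆ (_ : ∀ i, x i ∈ (∅ : Set E)), ‖β n x‖)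
          = fun _ => (0 : ℝ) := by
        funext x
        refine le_antisymm (Real.iSup_le (fun h =>
          absurd (h ⟨0, Nat.pos_of_ne_zero hn0⟩) (Set.notMem_empty _)) le_rfl)
          (Real.iSup_nonneg fun _ => norm_nonneg _)
      show (⨆ (x : Fin n → E) (_ : ∀ i, x i ∈ (∅ : Set E)), ‖β n x‖) = 0
      rw [inner0]
      exact ciSup_const
    · have hUn : IsCompact (B ∪ -B) := hB.union (hB.neg)
      set K := closure (convexHull ℝ (B ∪ -B)) with hK
      have hKc : IsCompact K := TotallyBounded.isCompact_of_isClosed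
        (totallyBounded_convexHull.mpr hUn.totallyBounded).closure isClosed_closure
      set S := (fun y : E => (3 : ℝ) • y) '' K with hS
      have hSc : IsCompact S := hKc.image (continuous_const_smul _)
      obtain ⟨C, hC⟩ := hSc.isBounded.exists_norm_le
      refine Summable.of_nonneg_of_le
        (fun n => Real.iSup_nonneg fun x => Real.iSup_nonneg fun _ => norm_nonneg _)
        (fun n => ?_) (hdiag S hSc)
      have hD0 : 0 ≤ ⨆ y ∈ S, ‖β n (fun _ => y)‖ :=
        Real.iSup_nonneg fun y => Real.iSup_nonneg fun _ => norm_nonneg _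
      refine Real.iSup_le (fun x => Real.iSup_le (fun hx => ?_) hD0) hD0
      rcases Nat.eq_zero_or_pos n with rfl | hn
      · obtain ⟨b, hb⟩ := hBne
        have hbS : (3 : ℝ) • b ∈ S :=
          ⟨b, subset_closure (subset_convexHull ℝ _ (Or.inl hb)), rfl⟩
        have hx0 : x = fun _ => (3 : ℝ) • b := Subsingleton.elim _ _
        rw [hx0]
        exact le_diag_sup 0 (β 0) hC hbS
      · refine key_ineq n hn.ne' (β n) (hsymm n) hC ?_ x hx
        intro z hz ε
        refine ⟨(n : ℝ)⁻¹ • ∑ j, sgn (ε j) • z j, subset_closure ?_, rfl⟩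
        have hrew : (n : ℝ)⁻¹ • ∑ j, sgn (ε j) • z j
            = ∑ j : Fin n, (n : ℝ)⁻¹ • (if ε j then z j else -(z j)) := by
          rw [Finset.smul_sum]
          refine Finset.sum_congr rfl fun j _ => ?_
          cases hj : ε j <;> simp [sgn, hj]
        rw [hrew]
        refine Convex.sum_mem (convex_convexHull ℝ _) (fun j _ => by positivity) ?_
          (fun j _ => subset_convexHull ℝ _ ?_)
        · rw [Finset.sum_const, Finset.card_univ, Fintype.card_fin, nsmul_eq_mul]
          have : (n : ℝ) ≠ 0 := by exact_mod_cast hn.ne'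
          field_simp
        · cases hj : ε j
          · simpa using Or.inr (Set.neg_mem_neg.mpr (hz j))
          · simpa using Or.inl (hz j)
  · intro hfull B hB
    obtain ⟨C, hC⟩ := hB.isBounded.exists_norm_le
    have hC0 : (0 : ℝ) ≤ max C 0 := le_max_right _ _
    have hC' : ∀ y ∈ B, ‖y‖ ≤ max C 0 := fun y hy => (hC y hy).trans (le_max_left _ _)
    refine Summable.of_nonneg_of_le
      (fun n => Real.iSup_nonneg fun x => Real.iSup_nonneg fun _ => norm_nonneg _)
      (fun n => ?_) (hfull B hB)
    have hF0 : 0 ≤ ⨆ (x : Fin n → E) (_ : ∀ i, x i ∈ B), ‖β n x‖ :=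
      Real.iSup_nonneg fun x => Real.iSup_nonneg fun _ => norm_nonneg _
    refine Real.iSup_le (fun x => Real.iSup_le (fun hx => ?_) hF0) hF0
    have h := le_ciSup (bdd_full n (β n) hC0 hC') (fun _ : Fin n => x)
    rwa [ciSup_pos (fun i : Fin n => hx)] at h
end

section
/- Let 𝕜 be ℝ or ℂ and let V be a complete Hausdorff topological 𝕜-vector space whose topology is induced by a family 𝒫 of seminorms. Let α : ℝ → GL(V) be a one-parameter group of linear automorphisms of V (α_0 = id, α_{s+t} = α_s ∘ α_t) such that: (i) for every v ∈ V the orbit map t ↦ α_t(v) is continuous (strong continuity), and (ii) α has polynomial growth, i.e. for every p ∈ 𝒫 there is a monic polynomial r ∈ ℝ[t] with p(α_t(v)) ≤ r(|t|) · p(v) for all t ∈ ℝ and v ∈ V. Then the action map ℝ × V → V, (t, v) ↦ α_t(v), is jointly continuous. -/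
/-- Let `V` be a complete Hausdorff topological `𝕜`-vector space (`𝕜 = ℝ` or `ℂ`) whose
topology is induced by a family of seminorms `p`.  If `α : ℝ → GL(V)` is a one-parameter
group of linear automorphisms that is strongly continuous and has polynomial growth (for
every seminorm `p i` there is a monic polynomial `r` with `p i (α t v) ≤ r(|t|) ⬝ p i v`),
then the action map `ℝ × V → V` is jointly continuous. -/
theorem strongly_continuous_poly_growth_implies_jointly_continuous
    {𝕜 : Type*} [RCLike 𝕜] {V : Type*} [AddCommGroup V] [Module 𝕜 V]
    [UniformSpace V] [IsUniformAddGroup V] [CompleteSpace V] [T2Space V]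
    {ι : Type*} [Nonempty ι] (p : SeminormFamily 𝕜 V ι) (hp : WithSeminorms p)
    (α : ℝ → V ≃ₗ[𝕜] V)
    (h0 : α 0 = LinearEquiv.refl 𝕜 V)
    (hgrp : ∀ s t : ℝ, ∀ v : V, α (s + t) v = α s (α t v))
    (hcont : ∀ v : V, Continuous fun t : ℝ => α t v)
    (hgrowth : ∀ i : ι, ∃ r : Polynomial ℝ, r.Monic ∧
      ∀ (t : ℝ) (v : V), p i (α t v) ≤ r.eval |t| * p i v) :
    Continuous fun x : ℝ × V => α x.1 x.2 := by
  rw [continuous_iff_continuousAt]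
  rintro ⟨t₀, v₀⟩
  rw [ContinuousAt, hp.tendsto_nhds]
  intro i ε hε
  obtain ⟨r, -, hr⟩ := hgrowth i
  set C : ℝ := abs (r.eval (abs t₀)) + 1 with hC
  have hCpos : (0 : ℝ) < C := by positivity
  have hpc : Continuous (p i) := hp.continuous_seminorm i
  -- eventually the polynomial bound is below C
  have h1 : ∀ᶠ t in nhds t₀, r.eval |t| < C := by
    have hcont' : Continuous fun t : ℝ => r.eval |t| := r.continuous.comp continuous_abs
    have : r.eval (abs t₀) < C := by
      have := le_abs_self (r.eval (abs t₀)); linarith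
    exact (hcont'.continuousAt (x := t₀)).eventually_lt continuousAt_const this
  -- strong continuity at t₀ for v₀
  have h2 : ∀ᶠ t in nhds t₀, p i (α t v₀ - α t₀ v₀) < ε / 2 := by
    have ht : Filter.Tendsto (fun t => p i (α t v₀ - α t₀ v₀)) (nhds t₀) (nhds 0) := by
      have : Filter.Tendsto (fun t => α t v₀ - α t₀ v₀) (nhds t₀) (nhds 0) := by
        have := ((hcont v₀).sub (continuous_const (y := α t₀ v₀))).tendsto t₀
        simpa [Pi.sub_def] using this
      simpa [Function.comp_def] using (hpc.tendsto 0).comp this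
    exact ht.eventually_lt_const (by linarith)
  -- smallness of p i (v - v₀) near v₀
  have h3 : ∀ᶠ v in nhds v₀, p i (v - v₀) < ε / (2 * C) := by
    have ht : Filter.Tendsto (fun v : V => p i (v - v₀)) (nhds v₀) (nhds 0) := by
      have : Filter.Tendsto (fun v : V => v - v₀) (nhds v₀) (nhds 0) := by
        have := (continuous_id.sub (continuous_const (y := v₀))).tendsto v₀
        simpa [Pi.sub_def] using this
      simpa [Function.comp_def] using (hpc.tendsto 0).comp this
    exact ht.eventually_lt_const (by positivity)
  filter_upwards [continuousAt_fst.eventually (h1.and h2), continuousAt_snd.eventually h3]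
    with x hx hv
  obtain ⟨ha, hb⟩ := hx
  have key : p i (α x.1 x.2 - α t₀ v₀) ≤
      p i (α x.1 x.2 - α x.1 v₀) + p i (α x.1 v₀ - α t₀ v₀) := by
    have := map_add_le_add (p i) (α x.1 x.2 - α x.1 v₀) (α x.1 v₀ - α t₀ v₀)
    simpa [sub_add_sub_cancel] using this
  have heq : α x.1 x.2 - α x.1 v₀ = α x.1 (x.2 - v₀) := by
    simp [map_sub]
  have hb1 : p i (α x.1 x.2 - α x.1 v₀) < ε / 2 := by
    rw [heq]
    calc p i (α x.1 (x.2 - v₀)) ≤ r.eval |x.1| * p i (x.2 - v₀) := hr x.1 _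
      _ ≤ C * p i (x.2 - v₀) := mul_le_mul_of_nonneg_right ha.le (apply_nonneg _ _)
      _ < C * (ε / (2 * C)) := by exact mul_lt_mul_of_pos_left hv hCpos
      _ = ε / 2 := by field_simp
  linarith [key]
end

section
/- Let α be a strongly continuous, pointwise polynomially bounded one-parameter group on the complex Banach space V, and let v ∈ V. If α_f(v) = 0 for every Schwartz function f ∈ 𝒮(ℝ, ℂ), then v = 0. Consequently, if v ≠ 0 then Spec_α(v) ≠ ∅. -/
open MeasureTheory Filter
open scoped Pointwise

namespace ArvesonPaper

/-- The Fourier transform `f̂(p) = ∫ f(t) e^{itp} dt` of a Schwartz function. -/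
noncomputable def fourierT (f : SchwartzMap ℝ ℂ) (p : ℝ) : ℂ :=
  ∫ t : ℝ, f t * Complex.exp (Complex.I * (t : ℂ) * (p : ℂ))

variable {V : Type*} [NormedAddCommGroup V] [NormedSpace ℂ V]

/-- `α_f(v) = ∫ f(t) α_t(v) dt` (Bochner integral). -/
noncomputable def smear (α : ℝ → V →L[ℂ] V) (f : SchwartzMap ℝ ℂ) (v : V) : V :=
  ∫ t : ℝ, f t • α t v

/-- A one-parameter group of (automatically invertible) continuous linear maps. -/
def IsOneParamGroup (α : ℝ → V →L[ℂ] V) : Prop :=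
  α 0 = ContinuousLinearMap.id ℂ V ∧ ∀ s t : ℝ, α (s + t) = (α s).comp (α t)

/-- Strong continuity: each orbit map is continuous. -/
def StronglyCts (α : ℝ → V →L[ℂ] V) : Prop :=
  ∀ v : V, Continuous fun t : ℝ => α t v

/-- Pointwise polynomial boundedness of a one-parameter group. -/
def PtwisePolyBdd (α : ℝ → V →L[ℂ] V) : Prop :=
  ∀ v : V, ∃ C : ℝ, 0 < C ∧ ∃ N : ℕ, ∀ t : ℝ, ‖α t v‖ ≤ C * (1 + |t| ^ N)

/-- Polynomial boundedness (in operator norm) of a one-parameter group. -/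
def PolyBdd (α : ℝ → V →L[ℂ] V) : Prop :=
  ∃ C : ℝ, 0 < C ∧ ∃ N : ℕ, ∀ t : ℝ, ‖α t‖ ≤ C * (1 + |t| ^ N)

/-- The Arveson spectrum of a vector `v`. -/
def arvSpec (α : ℝ → V →L[ℂ] V) (v : V) : Set ℝ :=
  {p : ℝ | ∀ f : SchwartzMap ℝ ℂ, smear α f v = 0 → fourierT f p = 0}

/-- The Arveson spectrum of the whole representation. -/
def arvSpecFull (α : ℝ → V →L[ℂ] V) : Set ℝ :=
  {p : ℝ | ∀ f : SchwartzMap ℝ ℂ, (∀ v : V, smear α f v = 0) → fourierT f p = 0}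

/-- The spectral subspace `V(E)₀` of vectors with Arveson spectrum in `closure E`. -/
def specSub₀ (α : ℝ → V →L[ℂ] V) (E : Set ℝ) : Set V :=
  {v : V | arvSpec α v ⊆ closure E}

/-- The closed spectral subspace `V(E)`. -/
def specSub (α : ℝ → V →L[ℂ] V) (E : Set ℝ) : Set V :=
  closure (specSub₀ α E)

/-- The spectral subspace `V⁺(E) = ⋂_{ε>0} V(E + (−ε, ε))`. -/
def specSubPlus (α : ℝ → V →L[ℂ] V) (E : Set ℝ) : Set V :=
  ⋂ ε > (0 : ℝ), specSub α (E + Set.Ioo (-ε) ε)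


set_option linter.unusedSectionVars false

section Aux

open Real Complex SchwartzMap FourierTransform
open scoped ContDiff

/-- bundle a compactly supported smooth function as a Schwartz map -/
noncomputable def ofCS (f : ℝ → ℂ) (hsm : ContDiff ℝ ∞ f) (hcs : HasCompactSupport f) :
    SchwartzMap ℝ ℂ where
  toFun := f
  smooth' := hsm
  decay' := by
    intro k n
    have h1 : Continuous fun x : ℝ => ‖x‖ ^ k * ‖iteratedFDeriv ℝ n f x‖ := by
      exact ((continuous_norm.pow k)).mul
        ((hsm.continuous_iteratedFDeriv (by exact_mod_cast le_top)).norm)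
    have h2 : HasCompactSupport fun x : ℝ => ‖x‖ ^ k * ‖iteratedFDeriv ℝ n f x‖ :=
      ((hcs.iteratedFDeriv n).norm).mul_left
    obtain ⟨C, hC⟩ := h1.bounded_above_of_compact_support h2
    exact ⟨C, fun x => by
      have := hC x
      have h3 : 0 ≤ ‖x‖ ^ k * ‖iteratedFDeriv ℝ n f x‖ := by positivity
      calc ‖x‖ ^ k * ‖iteratedFDeriv ℝ n f x‖
          = ‖‖x‖ ^ k * ‖iteratedFDeriv ℝ n f x‖‖ := (Real.norm_of_nonneg h3).symm
        _ ≤ C := this⟩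

@[simp] lemma ofCS_apply (f : ℝ → ℂ) (hsm hcs) (x : ℝ) : ofCS f hsm hcs x = f x := rfl

lemma poly_aux {N : ℕ} {x : ℝ} (hx : 0 ≤ x) : (1 + x) ^ N ≤ 2 ^ N * (1 + x ^ N) := by
  calc (1 + x) ^ N ≤ (2 * max 1 x) ^ N := by
        apply pow_le_pow_left₀ (by positivity)
        rcases le_total x 1 with h | h
        · rw [max_eq_left h]; linarith
        · rw [max_eq_right h]; linarith
    _ = 2 ^ N * (max 1 x) ^ N := mul_pow _ _ _
    _ ≤ 2 ^ N * (1 + x ^ N) := by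
        gcongr
        rcases le_total x 1 with h | h
        · rw [max_eq_left h, one_pow]; nlinarith [pow_nonneg hx N]
        · rw [max_eq_right h]; nlinarith [pow_nonneg hx N]

lemma schwartz_int (f : SchwartzMap ℝ ℂ) (N : ℕ) :
    Integrable (fun u : ℝ => ‖f u‖ * (1 + |u|) ^ N) := by
  have h1 : Integrable (fun u : ℝ => (2:ℝ) ^ N * (‖f u‖ + ‖u‖ ^ N * ‖f u‖)) :=
    ((f.integrable (μ := volume)).norm.add (f.integrable_pow_mul volume N)).const_mul _
  refine h1.mono' ?_ ?_
  · exact ((f.continuous.norm).mul ((continuous_const.add (_root_.continuous_abs : Continuous fun u : ℝ => |u|)).pow N)).aestronglyMeasurable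
  · filter_upwards with u
    have h0 : (0:ℝ) ≤ ‖f u‖ * (1 + |u|) ^ N := by positivity
    rw [Real.norm_of_nonneg h0]
    have := poly_aux (N := N) (abs_nonneg u)
    have hfu : (0:ℝ) ≤ ‖f u‖ := norm_nonneg _
    calc ‖f u‖ * (1 + |u|) ^ N ≤ ‖f u‖ * (2 ^ N * (1 + |u| ^ N)) := by gcongr
      _ = 2 ^ N * (‖f u‖ + ‖u‖ ^ N * ‖f u‖) := by rw [Real.norm_eq_abs]; ring


variable [CompleteSpace V] {α : ℝ → V →L[ℂ] V} {v : V} {C : ℝ} {N : ℕ}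

/-- cleaner form of pointwise polynomial boundedness -/
lemma ptwise_bound (hpb : PtwisePolyBdd α) (v : V) :
    ∃ C : ℝ, 0 < C ∧ ∃ N : ℕ, ∀ t : ℝ, ‖α t v‖ ≤ C * (1 + |t|) ^ N := by
  obtain ⟨C, hC, N, hb⟩ := hpb v
  refine ⟨2 * C, by linarith, N, fun t => ?_⟩
  have h1 : |t| ^ N ≤ (1 + |t|) ^ N :=
    pow_le_pow_left₀ (abs_nonneg t) (by linarith) N
  have h2 : (1:ℝ) ≤ (1 + |t|) ^ N :=
    one_le_pow₀ (by have := abs_nonneg t; linarith)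
  calc ‖α t v‖ ≤ C * (1 + |t| ^ N) := hb t
    _ ≤ 2 * C * (1 + |t|) ^ N := by nlinarith

lemma smear_integrable (hsc : StronglyCts α)
    (hb : ∀ t : ℝ, ‖α t v‖ ≤ C * (1 + |t|) ^ N) (f : SchwartzMap ℝ ℂ) :
    Integrable (fun t : ℝ => f t • α t v) := by
  refine ((schwartz_int f N).const_mul C).mono' ?_ ?_
  · exact (f.continuous.smul (hsc v)).aestronglyMeasurable
  · filter_upwards with t
    rw [norm_smul]
    calc ‖f t‖ * ‖α t v‖ ≤ ‖f t‖ * (C * (1 + |t|) ^ N) := by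
          gcongr; exact hb t
      _ = C * (‖f t‖ * (1 + |t|) ^ N) := by ring

lemma smear_map (hgrp : IsOneParamGroup α) (hsc : StronglyCts α)
    (hb : ∀ t : ℝ, ‖α t v‖ ≤ C * (1 + |t|) ^ N) (f : SchwartzMap ℝ ℂ) (s : ℝ) :
    α s (smear α f v) = ∫ t : ℝ, f t • α (s + t) v := by
  rw [smear, ← ContinuousLinearMap.integral_comp_comm _ (smear_integrable hsc hb f)]
  refine integral_congr_ae (Eventually.of_forall fun t => ?_)
  show α s (f t • α t v) = f t • α (s + t) v
  rw [(α s).map_smul, hgrp.2 s t]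
  rfl

lemma smear_finset_sum (hsc : StronglyCts α)
    (hb : ∀ t : ℝ, ‖α t v‖ ≤ C * (1 + |t|) ^ N) {ι : Type*} (s : Finset ι)
    (f : ι → SchwartzMap ℝ ℂ) :
    smear α (∑ i ∈ s, f i) v = ∑ i ∈ s, smear α (f i) v := by
  classical
  induction s using Finset.induction_on with
  | empty =>
      simp only [Finset.sum_empty, smear]
      simp [SchwartzMap.coe_zero]
  | insert _ _ hx ih =>
      rename_i a s'
      rw [Finset.sum_insert hx, Finset.sum_insert hx, ← ih, smear, smear, smear,
        ← integral_add (smear_integrable hsc hb _) (smear_integrable hsc hb _)]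
      refine integral_congr_ae (Eventually.of_forall fun t => ?_)
      simp [add_smul]


section Approx

open Real Complex SchwartzMap FourierTransform
open scoped ContDiff Topology

noncomputable def bumpR : ContDiffBump (0:ℝ) := ⟨1, 2, one_pos, one_lt_two⟩

noncomputable def ψc : ℝ → ℂ := fun x => ((bumpR x : ℝ) : ℂ)

lemma ψc_smooth : ContDiff ℝ ∞ ψc :=
  Complex.ofRealCLM.contDiff.comp bumpR.contDiff

lemma ψc_cs : HasCompactSupport ψc :=
  bumpR.hasCompactSupport.comp_left (g := fun r : ℝ => (r : ℂ)) (by simp)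

lemma ψc_zero : ψc 0 = 1 := by
  have h0 : (0:ℝ) ∈ Metric.closedBall (0:ℝ) bumpR.rIn :=
    Metric.mem_closedBall_self (by norm_num [bumpR])
  have : bumpR (0:ℝ) = 1 := bumpR.one_of_mem_closedBall h0
  simp [ψc, this]

/-- the base Schwartz bump (compactly supported in Fourier variable) -/
noncomputable def ψS : SchwartzMap ℝ ℂ := ofCS ψc ψc_smooth ψc_cs

lemma div_smooth (c : ℝ) : ContDiff ℝ ∞ (fun x : ℝ => ψc (x / c)) :=
  ψc_smooth.comp (contDiff_id.div_const c)

lemma div_cs (c : ℝ) (hc : c ≠ 0) : HasCompactSupport (fun x : ℝ => ψc (x / c)) := by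
  have he : (fun x : ℝ => ψc (x / c)) = ψc ∘ (Homeomorph.mulRight₀ c⁻¹ (inv_ne_zero hc)) := by
    funext x; simp [Homeomorph.mulRight₀, div_eq_mul_inv]; rfl
  rw [he]
  exact ψc_cs.comp_isClosedEmbedding (Homeomorph.mulRight₀ c⁻¹ (inv_ne_zero hc)).isClosedEmbedding

/-- rescaled bumps -/
noncomputable def ψSn (n : ℕ) : SchwartzMap ℝ ℂ :=
  ofCS (fun x => ψc (x / ((n : ℝ) + 1))) (div_smooth _)
    (div_cs _ (by positivity))

/-- the approximate identity -/
noncomputable def Φ (n : ℕ) : SchwartzMap ℝ ℂ := (fourierCLE ℂ (SchwartzMap ℝ ℂ) (F := SchwartzMap ℝ ℂ)).symm (ψSn n)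

/-- the base inverse Fourier transform -/
noncomputable def Φb : SchwartzMap ℝ ℂ := (fourierCLE ℂ (SchwartzMap ℝ ℂ) (F := SchwartzMap ℝ ℂ)).symm ψS

lemma fourier_Φ_cs (n : ℕ) : HasCompactSupport (𝓕 ⇑(Φ n)) := by
  have h : 𝓕 ⇑(Φ n) = ⇑(ψSn n) := by
    exact congrArg DFunLike.coe ((fourierCLE ℂ (SchwartzMap ℝ ℂ) (F := SchwartzMap ℝ ℂ)).apply_symm_apply (ψSn n))
  rw [h]
  exact div_cs _ (by positivity)

lemma Φb_eq : ⇑Φb = 𝓕⁻ ψc := by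
  rw [Φb, fourierCLE_symm_apply, fourierInv_coe]; rfl

lemma Φ_apply (n : ℕ) (t : ℝ) :
    Φ n t = ((n : ℝ) + 1) • Φb (((n : ℝ) + 1) * t) := by
  have hn : ((n : ℝ) + 1) ≠ 0 := by positivity
  have h1 : Φ n t = 𝓕⁻ (fun x => ψc (x / ((n : ℝ) + 1))) t := by
    rw [Φ, fourierCLE_symm_apply, fourierInv_coe]; rfl
  rw [h1, Real.fourierInv_eq_fourier_neg]
  have h2 : 𝓕 (fun x : ℝ => ψc (x / ((n : ℝ) + 1))) (-t)
      = ∫ ξ : ℝ, Complex.exp (↑(-2 * π * ξ * (-t)) * Complex.I) • ψc (ξ / ((n : ℝ) + 1)) := by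
    rw [Real.fourier_real_eq_integral_exp_smul]
  have h3 : ∀ ξ : ℝ, Complex.exp (↑(-2 * π * ξ * (-t)) * Complex.I) • ψc (ξ / ((n : ℝ) + 1))
      = (fun u : ℝ => Complex.exp (↑(-2 * π * u * (-(((n : ℝ) + 1) * t))) * Complex.I) • ψc u)
        (ξ / ((n : ℝ) + 1)) := by
    intro ξ
    show _ = Complex.exp (↑(-2 * π * (ξ / ((n : ℝ) + 1)) * (-(((n : ℝ) + 1) * t))) * Complex.I)
      • ψc (ξ / ((n : ℝ) + 1))
    have harg : -2 * π * ξ * (-t) = -2 * π * (ξ / ((n : ℝ) + 1)) * (-(((n : ℝ) + 1) * t)) := by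
      field_simp
    rw [harg]
  rw [h2]
  rw [integral_congr_ae (Eventually.of_forall h3),
    MeasureTheory.Measure.integral_comp_div
      (fun u : ℝ => Complex.exp (↑(-2 * π * u * (-(((n : ℝ) + 1) * t))) * Complex.I) • ψc u)
      ((n : ℝ) + 1)]
  rw [abs_of_pos (by positivity)]
  congr 1
  rw [Φb_eq, Real.fourierInv_eq_fourier_neg,
    Real.fourier_real_eq_integral_exp_smul]

lemma smear_Φ (n : ℕ) :
    smear α (Φ n) v = ∫ u : ℝ, Φb u • α (u / ((n : ℝ) + 1)) v := by
  have hn : (0:ℝ) < (n : ℝ) + 1 := by positivity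
  have h1 : smear α (Φ n) v
      = ∫ t : ℝ, ((n : ℝ) + 1) • ((fun u => Φb u • α (u / ((n : ℝ) + 1)) v) (((n : ℝ) + 1) * t)) := by
    rw [smear]
    refine integral_congr_ae (Eventually.of_forall fun t => ?_)
    show (Φ n) t • α t v
      = ((n:ℝ)+1) • (Φb (((n:ℝ)+1)*t) • α ((((n:ℝ)+1)*t) / ((n:ℝ)+1)) v)
    rw [Φ_apply, smul_assoc, mul_div_cancel_left₀ _ hn.ne']
  rw [h1, integral_smul, MeasureTheory.Measure.integral_comp_mul_left
    (fun u => Φb u • α (u / ((n : ℝ) + 1)) v) ((n : ℝ) + 1)]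
  rw [abs_of_pos (by positivity), smul_smul, mul_inv_cancel₀ hn.ne', one_smul]

lemma integral_Φb : ∫ u : ℝ, Φb u = 1 := by
  have h1 : 𝓕 ⇑Φb = ψc := by
    exact congrArg DFunLike.coe ((fourierCLE ℂ (SchwartzMap ℝ ℂ) (F := SchwartzMap ℝ ℂ)).apply_symm_apply ψS)
  have h2 : 𝓕 ⇑Φb 0 = ∫ u : ℝ, Φb u := by
    rw [Real.fourier_real_eq_integral_exp_smul]
    refine integral_congr_ae (Eventually.of_forall fun u => ?_)
    norm_num
  rw [← h2, h1, ψc_zero]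

lemma approx (hgrp : IsOneParamGroup α) (hsc : StronglyCts α) (hC : 0 < C)
    (hb : ∀ t : ℝ, ‖α t v‖ ≤ C * (1 + |t|) ^ N) :
    Tendsto (fun n => smear α (Φ n) v) atTop (𝓝 v) := by
  have key : Tendsto (fun n : ℕ => ∫ u : ℝ, Φb u • α (u / ((n : ℝ) + 1)) v) atTop
      (𝓝 (∫ u : ℝ, Φb u • v)) := by
    refine tendsto_integral_of_dominated_convergence
      (fun u => C * (‖Φb u‖ * (1 + |u|) ^ N)) ?_ ?_ ?_ ?_
    · intro n
      exact (Φb.continuous.smul ((hsc v).comp (continuous_id.div_const _))).aestronglyMeasurable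
    · exact (schwartz_int Φb N).const_mul C
    · intro n
      filter_upwards with u
      rw [norm_smul]
      have hd : |u / ((n : ℝ) + 1)| ≤ |u| := by
        rw [abs_div]
        apply div_le_self (abs_nonneg u)
        rw [abs_of_pos (by positivity : (0:ℝ) < (n:ℝ)+1)]
        simp
      calc ‖Φb u‖ * ‖α (u / ((n : ℝ) + 1)) v‖
          ≤ ‖Φb u‖ * (C * (1 + |u / ((n : ℝ) + 1)|) ^ N) := by gcongr; exact hb _
        _ ≤ ‖Φb u‖ * (C * (1 + |u|) ^ N) := by gcongr
        _ = C * (‖Φb u‖ * (1 + |u|) ^ N) := by ring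
    · filter_upwards with u
      have h0 : Tendsto (fun n : ℕ => u / ((n : ℝ) + 1)) atTop (𝓝 0) := by
        have := tendsto_one_div_add_atTop_nhds_zero_nat.const_mul u
        rw [mul_zero] at this
        refine this.congr fun n => ?_
        ring
      have h1 : Tendsto (fun n : ℕ => α (u / ((n : ℝ) + 1)) v) atTop (𝓝 v) := by
        have := ((hsc v).tendsto 0).comp h0
        rwa [hgrp.1, ContinuousLinearMap.id_apply] at this
      exact tendsto_const_nhds.smul h1
  have hlim : (∫ u : ℝ, Φb u • v) = v := by
    rw [integral_smul_const, integral_Φb, one_smul]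
  have key2 := key.congr fun n => (smear_Φ n).symm
  rwa [hlim] at key2

end Approx


section Conv

open Real Complex SchwartzMap FourierTransform
open scoped ContDiff Topology

/-- scalar convolution theorem -/
lemma conv_thm (h f m : SchwartzMap ℝ ℂ) (hm : ∀ ξ : ℝ, m ξ = h ξ * 𝓕 (⇑f) ξ) (t : ℝ) :
    ((fourierCLE ℂ (SchwartzMap ℝ ℂ) (F := SchwartzMap ℝ ℂ)).symm m) t
      = ∫ s : ℝ, ((fourierCLE ℂ (SchwartzMap ℝ ℂ) (F := SchwartzMap ℝ ℂ)).symm h) s * f (t - s) := by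
  set k : SchwartzMap ℝ ℂ := (fourierCLE ℂ (SchwartzMap ℝ ℂ) (F := SchwartzMap ℝ ℂ)).symm h with hk
  have hkf : ∀ ξ : ℝ, 𝓕 (⇑k) ξ = h ξ := by
    intro ξ
    have h1 : 𝓕 (⇑k) = ⇑(fourierCLE ℂ (SchwartzMap ℝ ℂ) (F := SchwartzMap ℝ ℂ) k) := rfl
    rw [h1, hk, ContinuousLinearEquiv.apply_symm_apply]
  have hfinv : ∀ x : ℝ, 𝓕⁻ (𝓕 (⇑f)) x = f x := by
    intro x
    rw [Continuous.fourierInv_fourier_eq f.continuous f.integrable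
      (fourierCLE ℂ (SchwartzMap ℝ ℂ) (F := SchwartzMap ℝ ℂ) f).integrable]
  have hL : ((fourierCLE ℂ (SchwartzMap ℝ ℂ) (F := SchwartzMap ℝ ℂ)).symm m) t
      = ∫ ξ : ℝ, Complex.exp (↑(-2 * π * ξ * (-t)) * Complex.I) * m ξ := by
    have h1 : ((fourierCLE ℂ (SchwartzMap ℝ ℂ) (F := SchwartzMap ℝ ℂ)).symm m) t = 𝓕⁻ (⇑m) t := by
      rw [fourierCLE_symm_apply, fourierInv_coe]
    rw [h1, Real.fourierInv_eq_fourier_neg,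
      Real.fourier_real_eq_integral_exp_smul]
    simp_rw [smul_eq_mul]
  have hf' : ∀ u : ℝ, (f : ℝ → ℂ) u
      = ∫ ξ : ℝ, Complex.exp (↑(-2 * π * ξ * (-u)) * Complex.I) * 𝓕 (⇑f) ξ := by
    intro u
    rw [← hfinv u, Real.fourierInv_eq_fourier_neg,
      Real.fourier_real_eq_integral_exp_smul]
    simp_rw [smul_eq_mul]
  have hcont : Continuous fun z : ℝ × ℝ =>
      k z.1 * (Complex.exp (↑(-2 * π * z.2 * (-(t - z.1))) * Complex.I) * 𝓕 (⇑f) z.2) := by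
    have hGf : Continuous (𝓕 (⇑f)) := (fourierCLE ℂ (SchwartzMap ℝ ℂ) (F := SchwartzMap ℝ ℂ) f).continuous
    have he : Continuous fun z : ℝ × ℝ =>
        Complex.exp (↑(-2 * π * z.2 * (-(t - z.1))) * Complex.I) := by
      apply Complex.continuous_exp.comp
      apply Continuous.mul _ continuous_const
      apply Complex.continuous_ofReal.comp
      fun_prop
    exact (k.continuous.comp continuous_fst).mul (he.mul (hGf.comp continuous_snd))
  have hint : Integrable (Function.uncurry fun s ξ : ℝ =>
      k s * (Complex.exp (↑(-2 * π * ξ * (-(t - s))) * Complex.I) * 𝓕 (⇑f) ξ))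
      (volume.prod volume) := by
    refine (Integrable.mul_prod k.integrable.norm
      (fourierCLE ℂ (SchwartzMap ℝ ℂ) (F := SchwartzMap ℝ ℂ) f).integrable.norm).mono' hcont.aestronglyMeasurable ?_
    filter_upwards with z
    have heq : ‖Function.uncurry (fun s ξ : ℝ =>
        k s * (Complex.exp (↑(-2 * π * ξ * (-(t - s))) * Complex.I) * 𝓕 (⇑f) ξ)) z‖
        = ‖k z.1‖ * ‖𝓕 (⇑f) z.2‖ := by
      rw [Function.uncurry]
      simp only [norm_mul, Complex.norm_exp_ofReal_mul_I, one_mul]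
    rw [heq]
    exact le_of_eq rfl
  have hswap : (∫ s : ℝ, k s * f (t - s))
      = ∫ ξ : ℝ, ∫ s : ℝ,
          k s * (Complex.exp (↑(-2 * π * ξ * (-(t - s))) * Complex.I) * 𝓕 (⇑f) ξ) := by
    have h1 : (∫ s : ℝ, k s * f (t - s))
        = ∫ s : ℝ, ∫ ξ : ℝ,
            k s * (Complex.exp (↑(-2 * π * ξ * (-(t - s))) * Complex.I) * 𝓕 (⇑f) ξ) := by
      refine integral_congr_ae (Eventually.of_forall fun s => ?_)
      simp only []
      rw [hf' (t - s), ← integral_const_mul]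
    rw [h1]
    exact integral_integral_swap hint
  have hinner : ∀ ξ : ℝ,
      (∫ s : ℝ, k s * (Complex.exp (↑(-2 * π * ξ * (-(t - s))) * Complex.I) * 𝓕 (⇑f) ξ))
        = Complex.exp (↑(-2 * π * ξ * (-t)) * Complex.I) * m ξ := by
    intro ξ
    have h2 : ∀ s : ℝ,
        k s * (Complex.exp (↑(-2 * π * ξ * (-(t - s))) * Complex.I) * 𝓕 (⇑f) ξ)
          = (Complex.exp (↑(-2 * π * ξ * (-t)) * Complex.I) * 𝓕 (⇑f) ξ)
            * (Complex.exp (↑(-2 * π * s * ξ) * Complex.I) * k s) := by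
      intro s
      have hexp : (↑(-2 * π * ξ * (-(t - s))) * Complex.I : ℂ)
          = ↑(-2 * π * ξ * (-t)) * Complex.I + ↑(-2 * π * s * ξ) * Complex.I := by
        push_cast; ring
      rw [hexp, Complex.exp_add]; ring
    rw [integral_congr_ae (Eventually.of_forall h2), integral_const_mul]
    have h3 : (∫ s : ℝ, Complex.exp (↑(-2 * π * s * ξ) * Complex.I) * k s) = h ξ := by
      rw [← hkf ξ, Real.fourier_real_eq_integral_exp_smul]
      simp_rw [smul_eq_mul]
    rw [h3, hm ξ]
    ring
  rw [hL, hswap]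
  exact (integral_congr_ae (Eventually.of_forall hinner)).symm

/-- key lemma: smearing by an inverse Fourier transform of a product -/
lemma conv_smear (hgrp : IsOneParamGroup α) (hsc : StronglyCts α) (hC : 0 < C)
    (hb : ∀ t : ℝ, ‖α t v‖ ≤ C * (1 + |t|) ^ N)
    (h f m : SchwartzMap ℝ ℂ) (hm : ∀ ξ : ℝ, m ξ = h ξ * 𝓕 (⇑f) ξ)
    (hf0 : smear α f v = 0) :
    smear α ((fourierCLE ℂ (SchwartzMap ℝ ℂ) (F := SchwartzMap ℝ ℂ)).symm m) v = 0 := by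
  set k : SchwartzMap ℝ ℂ := (fourierCLE ℂ (SchwartzMap ℝ ℂ) (F := SchwartzMap ℝ ℂ)).symm h with hk
  -- the product-space function
  set H : ℝ × ℝ → V := fun z => (k z.1 * f (z.2 - z.1)) • α z.2 v with hH
  have hHcont : Continuous H := by
    refine Continuous.smul ?_ ((hsc v).comp continuous_snd)
    exact (k.continuous.comp continuous_fst).mul
      (f.continuous.comp (continuous_snd.sub continuous_fst))
  have hGint : Integrable (fun z : ℝ × ℝ => (k z.1 * f z.2) • α (z.1 + z.2) v)
      (volume.prod volume) := by
    refine (((schwartz_int k N).mul_prod (schwartz_int f N)).const_mul C).mono' ?_ ?_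
    · refine Continuous.aestronglyMeasurable (Continuous.smul ?_ ?_)
      · exact (k.continuous.comp continuous_fst).mul (f.continuous.comp continuous_snd)
      · exact (hsc v).comp (continuous_fst.add continuous_snd)
    · filter_upwards with z
      rw [norm_smul, norm_mul]
      have hp : (1 + |z.1 + z.2|) ^ N ≤ (1 + |z.1|) ^ N * (1 + |z.2|) ^ N := by
        rw [← mul_pow]
        refine pow_le_pow_left₀ (by positivity) ?_ N
        have := abs_add_le z.1 z.2
        have h1 : (0:ℝ) ≤ |z.1| := abs_nonneg _
        have h2 : (0:ℝ) ≤ |z.2| := abs_nonneg _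
        nlinarith
      calc ‖k z.1‖ * ‖f z.2‖ * ‖α (z.1 + z.2) v‖
          ≤ ‖k z.1‖ * ‖f z.2‖ * (C * (1 + |z.1 + z.2|) ^ N) := by
            gcongr; exact hb _
        _ ≤ ‖k z.1‖ * ‖f z.2‖ * (C * ((1 + |z.1|) ^ N * (1 + |z.2|) ^ N)) := by
            gcongr
        _ = C * (‖k z.1‖ * (1 + |z.1|) ^ N * (‖f z.2‖ * (1 + |z.2|) ^ N)) := by ring
  have hHint : Integrable H (volume.prod volume) := by
    refine ((measurePreserving_prod_add volume volume).integrable_comp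
      hHcont.aestronglyMeasurable).mp ?_
    refine hGint.congr ?_
    filter_upwards with z
    show (k z.1 * f z.2) • α (z.1 + z.2) v = H (z.1, z.1 + z.2)
    rw [hH]
    simp only [add_sub_cancel_left]
  -- main computation
  have step1 : smear α ((fourierCLE ℂ (SchwartzMap ℝ ℂ) (F := SchwartzMap ℝ ℂ)).symm m) v
      = ∫ t : ℝ, ∫ s : ℝ, H (s, t) := by
    rw [smear]
    refine integral_congr_ae (Eventually.of_forall fun t => ?_)
    simp only []
    rw [conv_thm h f m hm t, ← integral_smul_const]
  have step2 : (∫ t : ℝ, ∫ s : ℝ, H (s, t)) = ∫ s : ℝ, ∫ t : ℝ, H (s, t) := by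
    have := integral_integral_swap (f := fun t s => H (s, t)) (μ := volume) (ν := volume) ?_
    · exact this
    · exact hHint.swap
  have step3 : ∀ s : ℝ, (∫ t : ℝ, H (s, t)) = 0 := by
    intro s
    have h1 : (∫ t : ℝ, H (s, t)) = ∫ t : ℝ, k s • (f (t - s) • α t v) := by
      refine integral_congr_ae (Eventually.of_forall fun t => ?_)
      rw [hH]
      show (k s * f (t - s)) • α t v = k s • f (t - s) • α t v
      rw [mul_smul]
    have h2 : (∫ t : ℝ, k s • (f (t - s) • α t v))
        = ∫ x : ℝ, k s • (f x • α (x + s) v) := by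
      rw [← integral_add_right_eq_self (fun t => k s • (f (t - s) • α t v)) s]
      refine integral_congr_ae (Eventually.of_forall fun x => ?_)
      simp only [add_sub_cancel_right]
      
    have h3 : (∫ x : ℝ, k s • (f x • α (x + s) v)) = k s • α s (smear α f v) := by
      rw [smear_map hgrp hsc hb f s, integral_smul]
      congr 1
      refine integral_congr_ae (Eventually.of_forall fun x => ?_)
      show f x • α (x + s) v = f x • α (s + x) v
      rw [add_comm x s]
    rw [h1, h2, h3, hf0, map_zero, smul_zero]
  rw [step1, step2]
  calc (∫ s : ℝ, ∫ t : ℝ, H (s, t)) = ∫ s : ℝ, (0 : V) :=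
      integral_congr_ae (Eventually.of_forall step3)
    _ = 0 := integral_zero _ _

end Conv


section Main

open Real Complex SchwartzMap FourierTransform
open scoped ContDiff Topology

lemma schwartz_sum_apply {ι : Type*} (s : Finset ι) (F : ι → SchwartzMap ℝ ℂ) (x : ℝ) :
    (∑ i ∈ s, F i) x = ∑ i ∈ s, F i x := by
  classical
  induction s using Finset.induction_on with
  | empty => simp
  | insert _ _ hx ih =>
      rename_i a s'
      rw [Finset.sum_insert hx, Finset.sum_insert hx, SchwartzMap.add_apply, ih]

lemma conj_smooth : ContDiff ℝ ∞ (fun z : ℂ => (starRingEnd ℂ) z) := by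
  have h : (fun z : ℂ => (starRingEnd ℂ) z) = ⇑Complex.conjCLE := by
    funext z; simp
  rw [h]
  exact Complex.conjCLE.contDiff

set_option maxHeartbeats 1000000 in
lemma smear_eq_zero_of_fourier_cs (hgrp : IsOneParamGroup α) (hsc : StronglyCts α)
    (hC : 0 < C) (hb : ∀ t : ℝ, ‖α t v‖ ≤ C * (1 + |t|) ^ N)
    (hne : ∀ ξ : ℝ, ∃ f : SchwartzMap ℝ ℂ, smear α f v = 0 ∧ 𝓕 (⇑f) ξ ≠ 0)
    (g : SchwartzMap ℝ ℂ) (hg : HasCompactSupport (𝓕 (⇑g))) :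
    smear α g v = 0 := by
  classical
  choose F hF0 hFne using hne
  set Gs : SchwartzMap ℝ ℂ := fourierCLE ℂ (SchwartzMap ℝ ℂ) (F := SchwartzMap ℝ ℂ) g with hGs
  have hGsc : ⇑Gs = 𝓕 (⇑g) := rfl
  set K : Set ℝ := tsupport (𝓕 (⇑g)) with hKdef
  have hK : IsCompact K := hg
  set u : ℝ → ℝ → ℂ := fun i => ⇑(fourierCLE ℂ (SchwartzMap ℝ ℂ) (F := SchwartzMap ℝ ℂ) (F i)) with hu
  have hucont : ∀ i, Continuous (u i) := fun i => (fourierCLE ℂ (SchwartzMap ℝ ℂ) (F := SchwartzMap ℝ ℂ) (F i)).continuous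
  have husmooth : ∀ i, ContDiff ℝ ∞ (u i) := fun i => (fourierCLE ℂ (SchwartzMap ℝ ℂ) (F := SchwartzMap ℝ ℂ) (F i)).smooth'
  have hUopen : ∀ i : ℝ, IsOpen {x : ℝ | u i x ≠ 0} := by
    intro i
    have : {x : ℝ | u i x ≠ 0} = (u i ⁻¹' {0})ᶜ := rfl
    rw [this]
    exact (isClosed_singleton.preimage (hucont i)).isOpen_compl
  have hcover : K ⊆ ⋃ i : ℝ, {x : ℝ | u i x ≠ 0} := fun x _ =>
    Set.mem_iUnion.mpr ⟨x, hFne x⟩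
  obtain ⟨s, hs⟩ := hK.elim_finite_subcover (fun i : ℝ => {x : ℝ | u i x ≠ 0}) hUopen hcover
  -- the denominator
  set Dc : ℝ → ℂ := fun x => ∑ i ∈ s, (starRingEnd ℂ) (u i x) * u i x with hDc
  have hDceq : ∀ x, Dc x = ((∑ i ∈ s, Complex.normSq (u i x) : ℝ) : ℂ) := by
    intro x
    rw [hDc]
    push_cast
    refine Finset.sum_congr rfl fun i _ => ?_
    exact Complex.normSq_eq_conj_mul_self.symm
  have hDcsm : ContDiff ℝ ∞ Dc :=
    ContDiff.sum fun i _ => (conj_smooth.comp (husmooth i)).mul (husmooth i)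
  have hDcK : ∀ x ∈ K, Dc x ≠ 0 := by
    intro x hx
    have hx' := hs hx
    rw [Set.mem_iUnion₂] at hx'
    obtain ⟨i, his, hiu⟩ := hx'
    have h1 : 0 < Complex.normSq (u i x) := Complex.normSq_pos.mpr hiu
    have h2 : Complex.normSq (u i x) ≤ ∑ j ∈ s, Complex.normSq (u j x) :=
      Finset.single_le_sum (f := fun j => Complex.normSq (u j x)) (fun j _ => Complex.normSq_nonneg _) his
    rw [hDceq]
    exact_mod_cast ne_of_gt (lt_of_lt_of_le h1 h2)
  have hDc0 : ∀ x, Dc x = 0 → x ∉ K := fun x hd hx => hDcK x hx hd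
  have hDco : IsOpen {x : ℝ | Dc x ≠ 0} := by
    have : {x : ℝ | Dc x ≠ 0} = (Dc ⁻¹' {0})ᶜ := rfl
    rw [this]
    exact (isClosed_singleton.preimage hDcsm.continuous).isOpen_compl
  -- the division functions
  set hfun : ℝ → ℝ → ℂ :=
    fun i x => if Dc x = 0 then 0 else Gs x * (starRingEnd ℂ) (u i x) / Dc x with hh
  have hzeroK : ∀ i, ∀ x, x ∉ K → hfun i x = 0 := by
    intro i x hx
    by_cases hd : Dc x = 0
    · simp [hh, hd]
    · have hg0 : Gs x = 0 := by
        rw [hGsc]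
        exact image_eq_zero_of_notMem_tsupport hx
      simp [hh, hd, hg0]
  have hcs : ∀ i, HasCompactSupport (hfun i) := fun i =>
    HasCompactSupport.intro hK (hzeroK i)
  have hsm : ∀ i, ContDiff ℝ ∞ (hfun i) := by
    intro i
    rw [contDiff_iff_contDiffAt]
    intro x
    by_cases hd : Dc x = 0
    · have hxK : x ∉ K := hDc0 x hd
      have hev : hfun i =ᶠ[𝓝 x] (fun _ => (0:ℂ)) :=
        eventually_of_mem ((isClosed_tsupport _).isOpen_compl.mem_nhds hxK)
          (fun y hy => hzeroK i y hy)
      exact (contDiffAt_const (c := (0:ℂ))).congr_of_eventuallyEq hev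
    · have hev : hfun i =ᶠ[𝓝 x] (fun y => Gs y * (starRingEnd ℂ) (u i y) * (Dc y)⁻¹) :=
        eventually_of_mem (hDco.mem_nhds hd)
          (fun y hy => by simp only [hh, if_neg hy, div_eq_mul_inv])
      refine ContDiffAt.congr_of_eventuallyEq ?_ hev
      exact ((Gs.smooth').contDiffAt.mul
        ((conj_smooth.comp (husmooth i)).contDiffAt)).mul (hDcsm.contDiffAt.inv hd)
  have hsum : ∀ x, Gs x = ∑ i ∈ s, hfun i x * u i x := by
    intro x
    by_cases hd : Dc x = 0
    · have hxK : x ∉ K := hDc0 x hd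
      have hg0 : Gs x = 0 := by
        rw [hGsc]; exact image_eq_zero_of_notMem_tsupport hxK
      simp [hh, hd, hg0]
    · have h1 : ∀ i ∈ s, hfun i x * u i x
          = Gs x / Dc x * ((starRingEnd ℂ) (u i x) * u i x) := by
        intro i _
        simp only [hh, if_neg hd]
        ring
      rw [Finset.sum_congr rfl h1, ← Finset.mul_sum]
      have h2 : ∑ i ∈ s, (starRingEnd ℂ) (u i x) * u i x = Dc x := rfl
      rw [h2, div_mul_cancel₀ _ hd]
  -- bundle the products as Schwartz maps
  set M : ℝ → SchwartzMap ℝ ℂ := fun i => ofCS (fun x => hfun i x * u i x)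
      ((hsm i).mul (husmooth i)) ((hcs i).mul_right) with hM
  have hGsum : Gs = ∑ i ∈ s, M i := by
    ext x
    rw [schwartz_sum_apply]
    exact hsum x
  have hg_eq : g = ∑ i ∈ s, (fourierCLE ℂ (SchwartzMap ℝ ℂ) (F := SchwartzMap ℝ ℂ)).symm (M i) := by
    have h1 : g = (fourierCLE ℂ (SchwartzMap ℝ ℂ) (F := SchwartzMap ℝ ℂ)).symm Gs := by
      rw [hGs, ContinuousLinearEquiv.symm_apply_apply]
    rw [h1, hGsum, map_sum]
  rw [hg_eq, smear_finset_sum hsc hb]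
  refine Finset.sum_eq_zero fun i _ => ?_
  exact conv_smear hgrp hsc hC hb (ofCS (hfun i) (hsm i) (hcs i)) (F i) (M i)
    (fun ξ => rfl) (hF0 i)

lemma fourier_eq_fourierT (f : SchwartzMap ℝ ℂ) (ξ : ℝ) :
    𝓕 (⇑f) ξ = fourierT f (-(2 * π * ξ)) := by
  rw [Real.fourier_real_eq_integral_exp_smul, fourierT]
  refine integral_congr_ae (Eventually.of_forall fun t => ?_)
  show Complex.exp (↑(-2 * π * t * ξ) * Complex.I) • f t
    = f t * Complex.exp (Complex.I * ↑t * ↑(-(2 * π * ξ)))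
  rw [smul_eq_mul, mul_comm]
  congr 2
  push_cast
  ring

end Main

end Aux


section Final

open Real SchwartzMap FourierTransform
open scoped Topology

/-- If `α` is a strongly continuous, pointwise polynomially bounded one-parameter group on a
complex Banach space `V` and `α_f(v) = 0` for every Schwartz function `f`, then `v = 0`.
Consequently, `v ≠ 0` implies `Spec_α(v) ≠ ∅`. -/
theorem eq_zero_of_smear_eq_zero_and_spec_nonempty
    {V : Type*} [NormedAddCommGroup V] [NormedSpace ℂ V] [CompleteSpace V]
    (α : ℝ → V →L[ℂ] V) (hgrp : IsOneParamGroup α)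
    (hsc : StronglyCts α) (hpb : PtwisePolyBdd α) (v : V) :
    ((∀ f : SchwartzMap ℝ ℂ, smear α f v = 0) → v = 0) ∧
    (v ≠ 0 → (arvSpec α v).Nonempty) := by
  obtain ⟨C, hC, N, hb⟩ := ptwise_bound hpb v
  have happrox := approx (α := α) (v := v) hgrp hsc hC hb
  constructor
  · intro hall
    have h3 : Tendsto (fun n : ℕ => smear α (Φ n) v) atTop (𝓝 (0 : V)) := by
      simpa [hall] using (tendsto_const_nhds : Tendsto (fun _ : ℕ => (0 : V)) atTop (𝓝 0))
    exact tendsto_nhds_unique happrox h3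
  · intro hv
    rw [Set.nonempty_iff_ne_empty]
    intro hemp
    have hne : ∀ ξ : ℝ, ∃ f : SchwartzMap ℝ ℂ, smear α f v = 0 ∧ 𝓕 (⇑f) ξ ≠ 0 := by
      intro ξ
      have hp : (-(2 * π * ξ)) ∉ arvSpec α v := by
        rw [hemp]; exact Set.notMem_empty _
      rw [arvSpec, Set.mem_setOf_eq] at hp
      push_neg at hp
      obtain ⟨f, hf0, hfne⟩ := hp
      exact ⟨f, hf0, by rw [fourier_eq_fourierT]; exact hfne⟩
    have hzero : ∀ n : ℕ, smear α (Φ n) v = 0 := fun n =>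
      smear_eq_zero_of_fourier_cs hgrp hsc hC hb hne (Φ n) (fourier_Φ_cs n)
    have h3 : Tendsto (fun n : ℕ => smear α (Φ n) v) atTop (𝓝 (0 : V)) := by
      simpa [hzero] using (tendsto_const_nhds : Tendsto (fun _ : ℕ => (0 : V)) atTop (𝓝 0))
    exact hv (tendsto_nhds_unique happrox h3)


end Final

end ArvesonPaper
end

section
/- Let α be a strongly continuous one-parameter group on the complex Banach space V, and assume α is polynomially bounded (there exist C > 0 and N ∈ ℕ with ‖α_t‖ ≤ C(1 + |t|^N) for all t ∈ ℝ). Then for every subset E ⊆ ℝ the set V(E)₀ is closed in V, and V(E)₀ = V(E) = V⁺(E). -/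
open MeasureTheory Filter
open scoped Pointwise

namespace ArvesonPaper

variable {V : Type*} [NormedAddCommGroup V] [NormedSpace ℂ V]

section Auxiliary

open Complex
open scoped FourierTransform SchwartzMap Real

noncomputable def FS : 𝓢(ℝ, ℂ) ≃L[ℂ] 𝓢(ℝ, ℂ) := FourierTransform.fourierCLE ℂ 𝓢(ℝ, ℂ)

lemma FS_apply (f : 𝓢(ℝ, ℂ)) : ⇑(FS f) = 𝓕 ⇑f := by
  rw [FS, FourierTransform.fourierCLE_apply]; exact SchwartzMap.fourier_coe f

lemma FS_symm_apply (f : 𝓢(ℝ, ℂ)) : ⇑(FS.symm f) = 𝓕⁻ ⇑f := by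
  rw [FS, FourierTransform.fourierCLE_symm_apply]; exact SchwartzMap.fourierInv_coe f

lemma fourierT_eq (f : 𝓢(ℝ, ℂ)) (p : ℝ) :
    fourierT f p = 𝓕 ⇑f (-(p / (2 * Real.pi))) := by
  rw [Real.fourier_real_eq_integral_exp_smul, fourierT]
  congr 1
  ext t
  rw [smul_eq_mul]
  have h : (-2 * Real.pi * t * (-(p / (2 * Real.pi))) : ℝ) = t * p := by
    field_simp
  rw [h, mul_comm]
  congr 1
  push_cast
  ring

lemma fourierT_FS (b : 𝓢(ℝ, ℂ)) (p : ℝ) :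
    fourierT (FS b) p = b (p / (2 * Real.pi)) := by
  rw [fourierT_eq, FS_apply, ← Real.fourierInv_eq_fourier_neg]
  have hFb : Integrable (𝓕 ⇑b) := by
    rw [← FS_apply]; exact (FS b).integrable
  rw [Continuous.fourierInv_fourier_eq b.continuous (b.integrable) hFb]

lemma fourierT_symm (f : 𝓢(ℝ, ℂ)) (x : ℝ) :
    (FS.symm f) x = fourierT f (2 * Real.pi * x) := by
  rw [fourierT_eq]
  have h : -(2 * Real.pi * x / (2 * Real.pi)) = -x := by
    field_simp
  rw [h, ← Real.fourierInv_eq_fourier_neg, ← FS_symm_apply]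

/-- Compactly supported smooth functions are Schwartz. -/
noncomputable def ofCC (φ : ℝ → ℂ) (h1 : ContDiff ℝ (⊤ : ℕ∞) φ) (h2 : HasCompactSupport φ) :
    𝓢(ℝ, ℂ) where
  toFun := φ
  smooth' := h1
  decay' := by
    intro k n
    have hc : Continuous fun x : ℝ => ‖x‖ ^ k * ‖iteratedFDeriv ℝ n φ x‖ :=
      (continuous_norm.pow k).mul (h1.continuous_iteratedFDeriv (mod_cast le_top)).norm
    have hcs : HasCompactSupport fun x : ℝ => ‖x‖ ^ k * ‖iteratedFDeriv ℝ n φ x‖ :=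
      ((h2.iteratedFDeriv n).norm).mul_left
    obtain ⟨C, hC⟩ := hcs.exists_bound_of_continuous hc
    refine ⟨C, fun x => ?_⟩
    have := hC x
    rwa [Real.norm_of_nonneg (by positivity)] at this

@[simp] lemma ofCC_apply (φ : ℝ → ℂ) (h1 : ContDiff ℝ (⊤ : ℕ∞) φ) (h2 : HasCompactSupport φ) (x : ℝ) :
    ofCC φ h1 h2 x = φ x := rfl

lemma weight_pow_le (N : ℕ) (s u : ℝ) :
    (1 + |u|) ^ N ≤ (1 + |s|) ^ N * (1 + |u - s|) ^ N := by
  rw [← mul_pow]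
  apply pow_le_pow_left₀ (by positivity)
  have h : |u| ≤ |s| + |u - s| := by
    have := abs_add_le s (u - s)
    simpa using this
  nlinarith [abs_nonneg s, abs_nonneg (u - s)]

lemma schwartz_weight_integrable (f : 𝓢(ℝ, ℂ)) (N : ℕ) :
    Integrable (fun t => ‖f t‖ * (1 + |t|) ^ N) := by
  have h1 : Integrable (fun t : ℝ => ‖f t‖) := (f.integrable (μ := volume)).norm
  have h2 := f.integrable_pow_mul volume N
  refine ((h1.const_mul ((2:ℝ) ^ N)).add (h2.const_mul ((2:ℝ) ^ N))).mono' ?_ ?_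
  · exact ((f.continuous.norm).mul ((continuous_const.add _root_.continuous_abs).pow N)).aestronglyMeasurable
  · filter_upwards with t
    have hb : (1 + |t|) ^ N ≤ 2 ^ N * (1 + |t| ^ N) := by
      have h3 : (1 + |t|) ≤ 2 * max 1 |t| := by
        rcases le_total 1 |t| with h | h
        · rw [max_eq_right h]; linarith
        · rw [max_eq_left h]; linarith
      have h4 : (1 + |t|) ^ N ≤ (2 * max 1 |t|) ^ N :=
        pow_le_pow_left₀ (by positivity) h3 N
      have h5 : (max 1 |t|) ^ N ≤ 1 + |t| ^ N := by
        rcases le_total 1 |t| with h | h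
        · rw [max_eq_right h]
          nlinarith [pow_nonneg (abs_nonneg t) N]
        · rw [max_eq_left h, one_pow]
          nlinarith [pow_nonneg (abs_nonneg t) N]
      calc (1 + |t|) ^ N ≤ (2 * max 1 |t|) ^ N := h4
        _ = 2 ^ N * (max 1 |t|) ^ N := by rw [mul_pow]
        _ ≤ 2 ^ N * (1 + |t| ^ N) := by
            have : (0:ℝ) ≤ 2 ^ N := by positivity
            nlinarith
    rw [Real.norm_of_nonneg (by positivity)]
    have hf : (0:ℝ) ≤ ‖f t‖ := norm_nonneg _
    calc ‖f t‖ * (1 + |t|) ^ N ≤ ‖f t‖ * (2 ^ N * (1 + |t| ^ N)) := by nlinarith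
      _ = 2 ^ N * ‖f t‖ + 2 ^ N * (‖t‖ ^ N * ‖f t‖) := by
          rw [Real.norm_eq_abs]; ring

lemma conv_eq (a b : 𝓢(ℝ, ℂ)) (u : ℝ) :
    (∫ s, 𝓕 ⇑a s * 𝓕 ⇑b (u - s)) = 𝓕 (fun t => a t * b t) u := by
  have hFa_cont : Continuous (𝓕 ⇑a) := by rw [← FS_apply]; exact (FS a).continuous
  have hFa_int : Integrable (𝓕 ⇑a) := by rw [← FS_apply]; exact (FS a).integrable
  have hrw : ∀ s, 𝓕 ⇑b (u - s) = ∫ t, Complex.exp (((-2 * π * t * (u - s) : ℝ) : ℂ) * I) * b t := by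
    intro s
    rw [Real.fourier_real_eq_integral_exp_smul]
    simp [smul_eq_mul]
  calc (∫ s, 𝓕 ⇑a s * 𝓕 ⇑b (u - s))
      = ∫ s, ∫ t, 𝓕 ⇑a s * (Complex.exp (((-2 * π * t * (u - s) : ℝ) : ℂ) * I) * b t) := by
        congr 1; ext s
        rw [hrw s, ← integral_const_mul]
    _ = ∫ t, ∫ s, 𝓕 ⇑a s * (Complex.exp (((-2 * π * t * (u - s) : ℝ) : ℂ) * I) * b t) := by
        apply integral_integral_swap
        have hmeas : AEStronglyMeasurable
            (Function.uncurry fun s t => 𝓕 ⇑a s *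
              (Complex.exp (((-2 * π * t * (u - s) : ℝ) : ℂ) * I) * b t))
            (volume.prod volume) := by
          apply Continuous.aestronglyMeasurable
          apply (hFa_cont.comp continuous_fst).mul
          apply Continuous.mul ?_ (b.continuous.comp continuous_snd)
          apply Complex.continuous_exp.comp
          apply Continuous.mul ?_ continuous_const
          exact Complex.continuous_ofReal.comp (by fun_prop)
        refine (((hFa_int.norm).mul_prod (b.integrable.norm)).mono' hmeas ?_)
        filter_upwards with p
        rw [Function.uncurry]
        rw [norm_mul, norm_mul, Complex.norm_exp_ofReal_mul_I, one_mul]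
    _ = ∫ t, (Complex.exp (((-2 * π * t * u : ℝ) : ℂ) * I) * b t) * a t := by
        congr 1; ext t
        have hsplit : ∀ s : ℝ, 𝓕 ⇑a s * (Complex.exp (((-2 * π * t * (u - s) : ℝ) : ℂ) * I) * b t)
            = (Complex.exp (((-2 * π * t * u : ℝ) : ℂ) * I) * b t) *
              (Complex.exp (((2 * π * s * t : ℝ) : ℂ) * I) * 𝓕 ⇑a s) := by
          intro s
          rw [show ((-2 * π * t * (u - s) : ℝ) : ℂ) * I
              = ((-2 * π * t * u : ℝ) : ℂ) * I + ((2 * π * s * t : ℝ) : ℂ) * I by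
            push_cast; ring]
          rw [Complex.exp_add]
          ring
        simp_rw [hsplit]
        rw [integral_const_mul]
        have hinv : (∫ s, Complex.exp (((2 * π * s * t : ℝ) : ℂ) * I) * 𝓕 ⇑a s) = a t := by
          have h1 : (∫ s, Complex.exp (((2 * π * s * t : ℝ) : ℂ) * I) * 𝓕 ⇑a s)
              = 𝓕⁻ (𝓕 ⇑a) t := by
            rw [Real.fourierInv_eq_fourier_neg,
              Real.fourier_real_eq_integral_exp_smul]
            congr 1; ext s
            rw [smul_eq_mul]
            congr 2
            push_cast; ring
          rw [h1, Continuous.fourierInv_fourier_eq a.continuous a.integrable hFa_int]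
        rw [hinv]
    _ = 𝓕 (fun t => a t * b t) u := by
        rw [Real.fourier_real_eq_integral_exp_smul]
        congr 1; ext t
        rw [smul_eq_mul]
        ring

variable [CompleteSpace V] {α : ℝ → V →L[ℂ] V} {C : ℝ} {N : ℕ}

lemma orbit_integrable (hsc : StronglyCts α) (hC : ∀ t, ‖α t‖ ≤ C * (1 + |t|) ^ N)
    (f : 𝓢(ℝ, ℂ)) (v : V) : Integrable (fun t => f t • α t v) := by
  refine ((schwartz_weight_integrable f N).const_mul (C * ‖v‖)).mono' ?_ ?_
  · exact (f.continuous.smul (hsc v)).aestronglyMeasurable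
  · filter_upwards with t
    rw [norm_smul]
    have h1 : ‖α t v‖ ≤ C * (1 + |t|) ^ N * ‖v‖ := by
      calc ‖α t v‖ ≤ ‖α t‖ * ‖v‖ := (α t).le_opNorm v
        _ ≤ C * (1 + |t|) ^ N * ‖v‖ := by gcongr; exact hC t
    calc ‖f t‖ * ‖α t v‖ ≤ ‖f t‖ * (C * (1 + |t|) ^ N * ‖v‖) := by
          gcongr
      _ = C * ‖v‖ * (‖f t‖ * (1 + |t|) ^ N) := by ring

lemma C_nonneg (hC : ∀ t, ‖α t‖ ≤ C * (1 + |t|) ^ N) : 0 ≤ C := by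
  have := (norm_nonneg (α 0)).trans (hC 0)
  simpa using this

lemma smear_zero_right (f : 𝓢(ℝ, ℂ)) : smear α f (0 : V) = 0 := by
  simp [smear]

lemma smear_sub_right (hsc : StronglyCts α) (hC : ∀ t, ‖α t‖ ≤ C * (1 + |t|) ^ N)
    (f : 𝓢(ℝ, ℂ)) (v w : V) : smear α f (v - w) = smear α f v - smear α f w := by
  rw [smear, smear, smear, ← integral_sub (orbit_integrable hsc hC f v)
    (orbit_integrable hsc hC f w)]
  congr 1
  ext t
  rw [map_sub, smul_sub]

lemma smear_norm_le (hsc : StronglyCts α) (hC : ∀ t, ‖α t‖ ≤ C * (1 + |t|) ^ N)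
    (f : 𝓢(ℝ, ℂ)) (v : V) :
    ‖smear α f v‖ ≤ C * (∫ t, ‖f t‖ * (1 + |t|) ^ N) * ‖v‖ := by
  calc ‖smear α f v‖ ≤ ∫ t, ‖f t • α t v‖ := norm_integral_le_integral_norm _
    _ ≤ ∫ t, C * ‖v‖ * (‖f t‖ * (1 + |t|) ^ N) := by
        refine integral_mono (orbit_integrable hsc hC f v).norm
          ((schwartz_weight_integrable f N).const_mul _) fun t => ?_
        rw [norm_smul]
        have h1 : ‖α t v‖ ≤ C * (1 + |t|) ^ N * ‖v‖ := by
          calc ‖α t v‖ ≤ ‖α t‖ * ‖v‖ := (α t).le_opNorm v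
            _ ≤ C * (1 + |t|) ^ N * ‖v‖ := by gcongr; exact hC t
        calc ‖f t‖ * ‖α t v‖ ≤ ‖f t‖ * (C * (1 + |t|) ^ N * ‖v‖) := by gcongr
          _ = C * ‖v‖ * (‖f t‖ * (1 + |t|) ^ N) := by ring
    _ = C * (∫ t, ‖f t‖ * (1 + |t|) ^ N) * ‖v‖ := by
        rw [integral_const_mul]; ring

lemma smear_continuous (hsc : StronglyCts α) (hC : ∀ t, ‖α t‖ ≤ C * (1 + |t|) ^ N)
    (f : 𝓢(ℝ, ℂ)) : Continuous fun v : V => smear α f v := by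
  have hC0 := C_nonneg hC
  have hM : 0 ≤ C * ∫ t, ‖f t‖ * (1 + |t|) ^ N :=
    mul_nonneg hC0 (integral_nonneg fun t => by positivity)
  refine LipschitzWith.continuous (K := ⟨_, hM⟩) (LipschitzWith.of_dist_le_mul fun v w => ?_)
  rw [dist_eq_norm, dist_eq_norm, ← smear_sub_right hsc hC]
  exact smear_norm_le hsc hC f (v - w)

lemma smear_add_left (hsc : StronglyCts α) (hC : ∀ t, ‖α t‖ ≤ C * (1 + |t|) ^ N)
    (f g : 𝓢(ℝ, ℂ)) (v : V) : smear α (f + g) v = smear α f v + smear α g v := by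
  rw [smear, smear, smear, ← integral_add (orbit_integrable hsc hC f v)
    (orbit_integrable hsc hC g v)]
  congr 1
  ext t
  simp [add_smul]

lemma smear_zero_left (v : V) : smear α (0 : 𝓢(ℝ, ℂ)) v = 0 := by
  simp [smear]

lemma smear_sum_left (hsc : StronglyCts α) (hC : ∀ t, ‖α t‖ ≤ C * (1 + |t|) ^ N)
    {ι : Type*} (s : Finset ι) (g : ι → 𝓢(ℝ, ℂ)) (v : V) :
    smear α (∑ i ∈ s, g i) v = ∑ i ∈ s, smear α (g i) v := by
  induction s using Finset.cons_induction with
  | empty => simp [smear_zero_left]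
  | cons i s hi ih => rw [Finset.sum_cons, Finset.sum_cons, smear_add_left hsc hC, ih]

lemma smear_FS_mul (hgrp : IsOneParamGroup α) (hsc : StronglyCts α)
    (hC : ∀ t, ‖α t‖ ≤ C * (1 + |t|) ^ N)
    (a b c : 𝓢(ℝ, ℂ)) (hc : ∀ x, c x = a x * b x) (v : V) :
    smear α (FS c) v = smear α (FS a) (smear α (FS b) v) := by
  have hC0 := C_nonneg (α := α) hC
  set A := FS a with hA
  set B := FS b with hB
  have hstep1 : ∀ s : ℝ, α s (smear α B v) = ∫ u, B (u - s) • α u v := by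
    intro s
    rw [smear, ← ContinuousLinearMap.integral_comp_comm (α s) (orbit_integrable hsc hC B v)]
    have e1 : (∫ t, α s (B t • α t v)) = ∫ t, B t • α (s + t) v := by
      congr 1; ext t
      rw [(α s).map_smul, hgrp.2 s t]; rfl
    rw [e1]
    have e2 := MeasureTheory.integral_add_right_eq_self (μ := volume)
      (fun u => B (u - s) • α u v) s
    rw [← e2]
    congr 1; ext t
    simp [add_comm]
  have key : Integrable (Function.uncurry fun s u => (A s * B (u - s)) • α u v)
      (volume.prod volume) := by
    have g1 : Integrable (fun s => ‖A s‖ * (1 + |s|) ^ N) := schwartz_weight_integrable A N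
    have g2 : Integrable (fun t => ‖B t‖ * (1 + |t|) ^ N) := schwartz_weight_integrable B N
    have hconv := (g1.convolution_integrand (ContinuousLinearMap.mul ℝ ℝ) g2).swap
    refine (hconv.const_mul (C * ‖v‖)).mono' ?_ ?_
    · apply Continuous.aestronglyMeasurable
      exact ((A.continuous.comp continuous_fst).mul
        (B.continuous.comp (continuous_snd.sub continuous_fst))).smul
        ((hsc v).comp continuous_snd)
    · filter_upwards with p
      simp only [Function.comp, Function.uncurry, ContinuousLinearMap.mul_apply',
        Prod.fst_swap, Prod.snd_swap]
      rw [norm_smul, norm_mul]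
      have h2 : (1 + |p.2|) ^ N ≤ (1 + |p.1|) ^ N * (1 + |p.2 - p.1|) ^ N :=
        weight_pow_le N p.1 p.2
      have h1 : ‖α p.2 v‖ ≤ C * ((1 + |p.1|) ^ N * (1 + |p.2 - p.1|) ^ N) * ‖v‖ := by
        calc ‖α p.2 v‖ ≤ ‖α p.2‖ * ‖v‖ := (α p.2).le_opNorm v
          _ ≤ C * (1 + |p.2|) ^ N * ‖v‖ := by gcongr; exact hC p.2
          _ ≤ C * ((1 + |p.1|) ^ N * (1 + |p.2 - p.1|) ^ N) * ‖v‖ := by gcongr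
      calc ‖A p.1‖ * ‖B (p.2 - p.1)‖ * ‖α p.2 v‖
          ≤ ‖A p.1‖ * ‖B (p.2 - p.1)‖ * (C * ((1 + |p.1|) ^ N * (1 + |p.2 - p.1|) ^ N) * ‖v‖) := by
            gcongr
        _ = C * ‖v‖ * (‖A p.1‖ * (1 + |p.1|) ^ N * (‖B (p.2 - p.1)‖ * (1 + |p.2 - p.1|) ^ N)) := by
            ring
  symm
  calc smear α A (smear α B v)
      = ∫ s, A s • ∫ u, B (u - s) • α u v := by
        rw [smear]; congr 1; ext s; rw [hstep1 s]
    _ = ∫ s, ∫ u, (A s * B (u - s)) • α u v := by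
        congr 1; ext s
        rw [← integral_smul]
        congr 1; ext u; rw [smul_smul]
    _ = ∫ u, ∫ s, (A s * B (u - s)) • α u v := integral_integral_swap key
    _ = ∫ u, (∫ s, A s * B (u - s)) • α u v := by
        congr 1; ext u; rw [integral_smul_const]
    _ = smear α (FS c) v := by
        rw [smear]; congr 1; ext u
        congr 1
        have hcoe : (⇑c : ℝ → ℂ) = fun t => a t * b t := funext hc
        calc (∫ s, A s * B (u - s)) = ∫ s, 𝓕 ⇑a s * 𝓕 ⇑b (u - s) := by
              simp only [hA, hB, FS_apply]
          _ = 𝓕 (fun t => a t * b t) u := conv_eq a b u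
          _ = 𝓕 ⇑c u := by rw [hcoe]
          _ = (FS c) u := by rw [FS_apply]

lemma smear_sum_zero (hsc : StronglyCts α) (hC : ∀ t, ‖α t‖ ≤ C * (1 + |t|) ^ N)
    {ι : Type*} (s : Finset ι) (g : ι → 𝓢(ℝ, ℂ)) (φS : 𝓢(ℝ, ℂ))
    (hφ : ∀ x, φS x = ∑ i ∈ s, g i x) (w : V)
    (h0 : ∀ i ∈ s, smear α (FS (g i)) w = 0) :
    smear α (FS φS) w = 0 := by
  have hφS : φS = ∑ i ∈ s, g i := by
    ext x
    rw [hφ]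
    have := congrFun (map_sum (FunLike.coeAddMonoidHom 𝓢(ℝ, ℂ) ℝ ℂ) g s) x
    simp only [FunLike.coe_coeAddMonoidHom] at this
    rw [this, Finset.sum_apply]
  rw [hφS, map_sum, smear_sum_left hsc hC]
  exact Finset.sum_eq_zero h0

lemma conj_comp_smooth (g : 𝓢(ℝ, ℂ)) : ContDiff ℝ (⊤ : ℕ∞) fun x => (starRingEnd ℂ) (g x) := by
  have h := ContDiff.comp (f := ⇑g) (g := fun z : ℂ => (starRingEnd ℂ) z)
    (𝕜 := ℝ) (n := ((⊤ : ℕ∞) : WithTop ℕ∞)) ?_ (g.smooth ⊤)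
  · exact h
  · have : (fun z : ℂ => (starRingEnd ℂ) z) = ⇑(Complex.conjCLE : ℂ →L[ℝ] ℂ) := by
      funext z; simp
    rw [this]
    exact (Complex.conjCLE : ℂ →L[ℝ] ℂ).contDiff

lemma smear_vanish (hgrp : IsOneParamGroup α) (hsc : StronglyCts α)
    (hC : ∀ t, ‖α t‖ ≤ C * (1 + |t|) ^ N)
    {E : Set ℝ} (w : V) (hw : arvSpec α w ⊆ closure E)
    (φ : ℝ → ℂ) (h1 : ContDiff ℝ (⊤ : ℕ∞) φ) (h2 : HasCompactSupport φ)
    (hsupp : ∀ q ∈ tsupport φ, 2 * Real.pi * q ∉ closure E) :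
    smear α (FS (ofCC φ h1 h2)) w = 0 := by
  classical
  have hKc : IsCompact (tsupport φ) := h2
  have hchoice : ∀ q : ℝ, q ∈ tsupport φ →
      ∃ f : 𝓢(ℝ, ℂ), smear α f w = 0 ∧ fourierT f (2 * Real.pi * q) ≠ 0 := by
    intro q hq
    have hns : 2 * Real.pi * q ∉ arvSpec α w := fun h => hsupp q hq (hw h)
    rw [arvSpec, Set.mem_setOf_eq] at hns
    push_neg at hns
    exact hns
  choose! f hf1 hf2 using hchoice
  set β : ℝ → 𝓢(ℝ, ℂ) := fun q => FS.symm (f q) with hβdef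
  have hβ : ∀ q x, β q x = fourierT (f q) (2 * Real.pi * x) := fun q x => fourierT_symm (f q) x
  set U : {q // q ∈ tsupport φ} → Set ℝ := fun i => {x | β i.1 x ≠ 0} with hU
  have hUopen : ∀ i, IsOpen (U i) := fun i =>
    isOpen_compl_singleton.preimage (β i.1).continuous
  have hcover : tsupport φ ⊆ ⋃ i, U i := by
    intro q hq
    refine Set.mem_iUnion.mpr ⟨⟨q, hq⟩, ?_⟩
    have := hf2 q hq
    rw [← hβ q q] at this
    exact this
  obtain ⟨s, hs⟩ := hKc.elim_finite_subcover U hUopen hcover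
  set D : ℝ → ℂ := fun x => ∑ i ∈ s, β i.1 x * (starRingEnd ℂ) (β i.1 x) with hD
  have hDsmooth : ContDiff ℝ (⊤ : ℕ∞) D := by
    apply ContDiff.sum
    intro i _
    exact ((β i.1).smooth ⊤).mul (conj_comp_smooth (β i.1))
  have hDK : ∀ x ∈ tsupport φ, D x ≠ 0 := by
    intro x hx
    obtain ⟨i, hi, hiU⟩ : ∃ i ∈ s, x ∈ U i := by
      have := hs hx
      simpa using this
    have hre : D x = ((∑ i ∈ s, Complex.normSq (β i.1 x) : ℝ) : ℂ) := by
      rw [hD]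
      push_cast
      exact Finset.sum_congr rfl fun j _ => (Complex.mul_conj _)
    rw [hre, Ne, Complex.ofReal_eq_zero]
    have hpos : 0 < ∑ i ∈ s, Complex.normSq (β i.1 x) :=
      Finset.sum_pos' (fun j _ => Complex.normSq_nonneg _)
        ⟨i, hi, Complex.normSq_pos.mpr hiU⟩
    exact ne_of_gt hpos
  set ψ : ℝ → ℂ := fun x => φ x / D x with hψ
  have hψs : ContDiff ℝ (⊤ : ℕ∞) ψ := by
    rw [contDiff_iff_contDiffAt]
    intro x
    by_cases hx : D x = 0
    · have hxK : x ∉ tsupport φ := fun h => hDK x h hx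
      refine ContDiffAt.congr_of_eventuallyEq (contDiffAt_const (c := (0 : ℂ))) ?_
      filter_upwards [(isClosed_tsupport φ).isOpen_compl.mem_nhds hxK] with y hy
      simp [hψ, image_eq_zero_of_notMem_tsupport hy]
    · have heq : ψ = fun y => φ y * (D y)⁻¹ := by
        funext y; rw [hψ]; simp [div_eq_mul_inv]
      rw [heq]
      exact h1.contDiffAt.mul (hDsmooth.contDiffAt.inv hx)
  have hψc : HasCompactSupport ψ :=
    HasCompactSupport.intro hKc fun x hx => by
      simp [hψ, image_eq_zero_of_notMem_tsupport hx]
  set bfun : {q // q ∈ tsupport φ} → ℝ → ℂ :=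
    fun i x => ψ x * (starRingEnd ℂ) (β i.1 x) with hbfun
  set cfun : {q // q ∈ tsupport φ} → ℝ → ℂ := fun i x => bfun i x * β i.1 x with hcfun
  have hbs : ∀ i, ContDiff ℝ (⊤ : ℕ∞) (bfun i) := fun i => hψs.mul (conj_comp_smooth (β i.1))
  have hbc : ∀ i, HasCompactSupport (bfun i) := fun i => hψc.mul_right
  have hcs : ∀ i, ContDiff ℝ (⊤ : ℕ∞) (cfun i) := fun i => (hbs i).mul ((β i.1).smooth ⊤)
  have hcc : ∀ i, HasCompactSupport (cfun i) := fun i => (hbc i).mul_right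
  have hkey : ∀ x, φ x = ∑ i ∈ s, cfun i x := by
    intro x
    have e : (∑ i ∈ s, cfun i x) = ψ x * D x := by
      rw [hD, Finset.mul_sum]
      exact Finset.sum_congr rfl fun i _ => by rw [hcfun, hbfun]; ring
    rw [e]
    by_cases hx : D x = 0
    · have hxK : x ∉ tsupport φ := fun h => hDK x h hx
      simp [image_eq_zero_of_notMem_tsupport hxK, hx]
    · rw [hψ]
      field_simp
  refine smear_sum_zero hsc hC s (fun i => ofCC (cfun i) (hcs i) (hcc i)) _ ?_ w ?_
  · intro x
    simpa using hkey x
  · intro i hi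
    have hmul := smear_FS_mul hgrp hsc hC (ofCC (bfun i) (hbs i) (hbc i)) (FS.symm (f i.1))
      (ofCC (cfun i) (hcs i) (hcc i)) (fun x => rfl) w
    rw [hmul, ContinuousLinearEquiv.apply_symm_apply, hf1 i.1 i.2, smear_zero_right]

end Auxiliary

/-- If the one-parameter group `α` is polynomially bounded (in operator norm), then for every
subset `E ⊆ ℝ` the spectral subspace `V(E)₀` is closed and `V(E)₀ = V(E) = V⁺(E)`. -/
theorem specSub₀_closed_of_polyBdd
    {V : Type*} [NormedAddCommGroup V] [NormedSpace ℂ V] [CompleteSpace V]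
    (α : ℝ → V →L[ℂ] V) (hgrp : IsOneParamGroup α)
    (hsc : StronglyCts α) (hpb : PolyBdd α) (E : Set ℝ) :
    IsClosed (specSub₀ α E) ∧ specSub₀ α E = specSub α E ∧ specSub α E = specSubPlus α E := by
  classical
  obtain ⟨C₀, hC₀pos, N, hCb⟩ := hpb
  set C : ℝ := 2 * C₀ with hCdef
  have hC : ∀ t, ‖α t‖ ≤ C * (1 + |t|) ^ N := by
    intro t
    refine (hCb t).trans ?_
    have h1 : |t| ^ N ≤ (1 + |t|) ^ N := by
      apply pow_le_pow_left₀ (abs_nonneg t)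
      linarith
    have h2 : (1 : ℝ) ≤ (1 + |t|) ^ N := one_le_pow₀ (by linarith [abs_nonneg t])
    rw [hCdef]
    nlinarith [hC₀pos.le]
  have key_closed : ∀ F : Set ℝ, IsClosed (specSub₀ α F) := by
    intro F
    apply isClosed_of_closure_subset
    intro v hv p hp
    by_contra hpF
    have hUopen : IsOpen {q : ℝ | 2 * Real.pi * q ∉ closure F} := by
      have he : {q : ℝ | 2 * Real.pi * q ∉ closure F}
          = (fun q : ℝ => 2 * Real.pi * q) ⁻¹' (closure F)ᶜ := rfl
      rw [he]
      exact (isClosed_closure.isOpen_compl).preimage (by fun_prop)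
    have hq0 : p / (2 * Real.pi) ∈ {q : ℝ | 2 * Real.pi * q ∉ closure F} := by
      have : 2 * Real.pi * (p / (2 * Real.pi)) = p := by
        field_simp
      simp only [Set.mem_setOf_eq, this]
      exact hpF
    obtain ⟨r, hr0, hball⟩ := Metric.nhds_basis_closedBall.mem_iff.mp (hUopen.mem_nhds hq0)
    set bump : ContDiffBump (p / (2 * Real.pi)) := ⟨r / 2, r, by positivity, by linarith⟩
      with hbdef
    set φ : ℝ → ℂ := fun x => ((bump x : ℝ) : ℂ) with hφdef
    have hφ1 : ContDiff ℝ (⊤ : ℕ∞) φ := Complex.ofRealCLM.contDiff.comp bump.contDiff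
    have hφ2 : HasCompactSupport φ :=
      bump.hasCompactSupport.comp_left (g := fun x : ℝ => (x : ℂ)) Complex.ofReal_zero
    have hφsupp : ∀ q ∈ tsupport φ, 2 * Real.pi * q ∉ closure F := by
      intro q hq
      have hsub : tsupport φ ⊆ tsupport (bump : ℝ → ℝ) :=
        closure_mono (Function.support_comp_subset Complex.ofReal_zero _)
      have hq2 := hsub hq
      rw [bump.tsupport_eq] at hq2
      exact hball hq2
    have hclosedset : IsClosed {w : V | smear α (FS (ofCC φ hφ1 hφ2)) w = 0} :=
      isClosed_singleton.preimage (smear_continuous hsc hC _)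
    have hzero : smear α (FS (ofCC φ hφ1 hφ2)) v = 0 := by
      refine closure_minimal (fun w hw => ?_) hclosedset hv
      exact smear_vanish hgrp hsc hC w hw φ hφ1 hφ2 hφsupp
    have hzeroT := hp _ hzero
    rw [fourierT_FS] at hzeroT
    have hone : bump (p / (2 * Real.pi)) = 1 :=
      bump.one_of_mem_closedBall (Metric.mem_closedBall_self (by positivity))
    rw [show ((ofCC φ hφ1 hφ2) (p / (2 * Real.pi)) : ℂ) = φ (p / (2 * Real.pi)) from rfl,
      hφdef] at hzeroT
    simp only [hone] at hzeroT
    exact one_ne_zero hzeroT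
  refine ⟨key_closed E, (key_closed E).closure_eq.symm, ?_⟩
  apply Set.Subset.antisymm
  · intro v hv
    apply Set.mem_iInter.mpr
    intro ε
    apply Set.mem_iInter.mpr
    intro hε
    refine closure_mono ?_ hv
    intro w hw
    intro p hp
    refine closure_mono ?_ (hw hp)
    intro x hx
    have h0 : (0 : ℝ) ∈ Set.Ioo (-ε) ε := ⟨neg_lt_zero.mpr hε, hε⟩
    simpa using Set.add_mem_add hx h0
  · intro v hv
    have hv' : ∀ ε : ℝ, 0 < ε → arvSpec α v ⊆ closure (E + Set.Ioo (-ε) ε) := by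
      intro ε hε
      have hmem : v ∈ specSub α (E + Set.Ioo (-ε) ε) :=
        Set.mem_iInter.mp (Set.mem_iInter.mp hv ε) hε
      rw [specSub, (key_closed _).closure_eq] at hmem
      exact hmem
    apply subset_closure
    intro p hp
    rw [Metric.mem_closure_iff]
    intro η hη
    have h1 := hv' (η / 3) (by positivity) hp
    rw [Metric.mem_closure_iff] at h1
    obtain ⟨x, hx, hdx⟩ := h1 (η / 3) (by positivity)
    obtain ⟨e, he, d, hd, rfl⟩ := hx
    refine ⟨e, he, ?_⟩
    have htri : dist p e ≤ dist p (e + d) + dist (e + d) e := dist_triangle _ _ _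
    have hde : dist (e + d) e = |d| := by
      rw [Real.dist_eq]
      congr 1
      ring
    have habs : |d| < η / 3 := abs_lt.mpr ⟨hd.1, hd.2⟩
    rw [hde] at htri
    linarith

end ArvesonPaper
end
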